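/- arXiv:2201.07637 — 6 statements merged into one kernel-verified Lean document; each statement's English description precedes it below -/
import Mathlib

section
/- For every positive integer n, the ordered Ramsey number of the nested matching NM_n versus the complete ordered graph on 3 vertices satisfies r_<(NM_n, K_3) ≤ (3 + √5)·n + 1. -/
/-- `G` (an ordered graph on `[m]`, modeled on `Fin m`) is an ordered subgraph of `H`
(on `Fin N`): there is a strictly increasing map preserving edges. -/
def OrderedSubgraph {m N : ℕ} (G : SimpleGraph (Fin m)) (H : SimpleGraph (Fin N)) : Prop :=
  ∃ φ : Fin m → Fin N, StrictMono φ ∧ ∀ i j : Fin m, G.Adj i j → H.Adj (φ i) (φ j)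

/-- The ordered Ramsey number `r_<(G, H)`: the least `N` such that every red-blue coloring
of the edges of the complete ordered graph on `N` vertices (given by its red graph `R`)
contains a red ordered copy of `G` or a blue ordered copy of `H`. -/
noncomputable def orderedRamsey {m k : ℕ} (G : SimpleGraph (Fin m)) (H : SimpleGraph (Fin k)) : ℕ :=
  sInf {N : ℕ | ∀ R : SimpleGraph (Fin N), OrderedSubgraph G R ∨ OrderedSubgraph H Rᶜ}

/-- The nested matching `NM_n`: the ordered graph on `2n` vertices with edges
`{i, 2n - i + 1}` (1-indexed), i.e. `i + j = 2n - 1` in 0-indexed form. -/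
def nestedMatching (n : ℕ) : SimpleGraph (Fin (2 * n)) :=
  SimpleGraph.fromRel (fun i j => (i : ℕ) + (j : ℕ) = 2 * n - 1)

/-- The ordered star `S_{l,r}` on `l + r - 1` vertices: the `l`-th vertex (1-indexed)
is adjacent to all other vertices. -/
def orderedStar (l r : ℕ) : SimpleGraph (Fin (l + r - 1)) :=
  SimpleGraph.fromRel (fun i _ => (i : ℕ) = l - 1)

/-- The join `G + H` of ordered graphs, identifying the rightmost vertex of `G`
with the leftmost vertex of `H`. -/
def orderedJoin {m k : ℕ} (G : SimpleGraph (Fin m)) (H : SimpleGraph (Fin k)) :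
    SimpleGraph (Fin (m + k - 1)) :=
  SimpleGraph.fromRel (fun i j =>
    (∃ a b : Fin m, G.Adj a b ∧ (i : ℕ) = (a : ℕ) ∧ (j : ℕ) = (b : ℕ)) ∨
    (∃ a b : Fin k, H.Adj a b ∧ (i : ℕ) = (a : ℕ) + (m - 1) ∧ (j : ℕ) = (b : ℕ) + (m - 1)))

/-- A connected ordered graph on `m` vertices is `n`-good if
`r_<(G, K_n) = (m-1)(n-1) + 1`. -/
def IsNGood {m : ℕ} (n : ℕ) (G : SimpleGraph (Fin m)) : Prop :=
  G.Connected ∧ orderedRamsey G (⊤ : SimpleGraph (Fin n)) = (m - 1) * (n - 1) + 1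

/-- Monotone caterpillar graphs: joins `S_{l₁,r₁} + ⋯ + S_{l_k,r_k}` of one-sided
ordered stars. -/
inductive IsMonotoneCaterpillar : ∀ {m : ℕ}, SimpleGraph (Fin m) → Prop
  | star {l r : ℕ} (hl : 1 ≤ l) (hr : 1 ≤ r) (h : l = 1 ∨ r = 1) :
      IsMonotoneCaterpillar (orderedStar l r)
  | join {m l r : ℕ} {G : SimpleGraph (Fin m)} (hl : 1 ≤ l) (hr : 1 ≤ r) (h : l = 1 ∨ r = 1)
      (hG : IsMonotoneCaterpillar G) : IsMonotoneCaterpillar (orderedJoin G (orderedStar l r))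

/-- A route in the `N × N` grid: a sequence of positions going only right or down. -/
def IsRoute {N : ℕ} (s : List (Fin N × Fin N)) : Prop :=
  s.Chain' (fun p q =>
    ((q.1 : ℕ) = (p.1 : ℕ) + 1 ∧ q.2 = p.2) ∨ (q.1 = p.1 ∧ (q.2 : ℕ) = (p.2 : ℕ) + 1))

open Finset
namespace NMAux

open scoped Classical

variable {N : ℕ}

/-- The set of red edges, as ordered pairs `(a,b)` with `a < b`. -/
noncomputable def redE (N : ℕ) (R : SimpleGraph (Fin N)) : Finset (Fin N × Fin N) :=
  Finset.univ.filter fun p => (p.1 : ℕ) < (p.2 : ℕ) ∧ R.Adj p.1 p.2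

/-- Red edges strictly nested inside `p`. -/
noncomputable def innerE (N : ℕ) (R : SimpleGraph (Fin N)) (p : Fin N × Fin N) :
    Finset (Fin N × Fin N) :=
  (redE N R).filter fun q => (p.1 : ℕ) < (q.1 : ℕ) ∧ (q.2 : ℕ) < (p.2 : ℕ)

/-- Height: the longest chain of nested red edges with outermost edge `p`. -/
noncomputable def ht (N : ℕ) (R : SimpleGraph (Fin N)) (p : Fin N × Fin N) : ℕ :=
  ((innerE N R p).attach.sup fun q => ht N R q.1) + 1
termination_by (p.2 : ℕ) - (p.1 : ℕ)
decreasing_by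
  · obtain hq := q.2
    simp only [innerE, redE, Finset.mem_filter, Finset.mem_univ, true_and] at hq
    omega

lemma ht_pos (R : SimpleGraph (Fin N)) (p : Fin N × Fin N) : 1 ≤ ht N R p := by
  rw [ht]; omega

lemma ht_lt_of_inner (R : SimpleGraph (Fin N)) {p q : Fin N × Fin N}
    (hq : q ∈ innerE N R p) : ht N R q < ht N R p := by
  conv_rhs => rw [ht]
  have h : ht N R q ≤ (innerE N R p).attach.sup fun r => ht N R r.1 :=
    by exact Finset.le_sup (f := fun r => ht N R r.1) (Finset.mem_attach _ ⟨q, hq⟩)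
  omega

lemma exists_chain (R : SimpleGraph (Fin N)) (p : Fin N × Fin N) (hp : p ∈ redE N R) :
    ∃ a b : ℕ → Fin N, a 0 = p.1 ∧ b 0 = p.2 ∧
      (∀ i, i < ht N R p → (a i, b i) ∈ redE N R) ∧
      (∀ i, i + 1 < ht N R p → (a i : ℕ) < (a (i+1) : ℕ) ∧ (b (i+1) : ℕ) < (b i : ℕ)) := by
  suffices H : ∀ k p, p ∈ redE N R → ((p.2 : ℕ) - (p.1 : ℕ)) ≤ k →
      ∃ a b : ℕ → Fin N, a 0 = p.1 ∧ b 0 = p.2 ∧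
      (∀ i, i < ht N R p → (a i, b i) ∈ redE N R) ∧
      (∀ i, i + 1 < ht N R p → (a i : ℕ) < (a (i+1) : ℕ) ∧ (b (i+1) : ℕ) < (b i : ℕ)) by
    exact H _ p hp le_rfl
  intro k
  induction k with
  | zero =>
    intro p hp hle
    exfalso
    simp only [redE, Finset.mem_filter, Finset.mem_univ, true_and] at hp
    omega
  | succ k ih =>
    intro p hp hle
    rcases Finset.eq_empty_or_nonempty (innerE N R p) with hemp | hne
    · refine ⟨fun _ => p.1, fun _ => p.2, rfl, rfl, ?_, ?_⟩
      · intro i hi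
        have h1 : ht N R p = 1 := by rw [ht, hemp]; simp
        have h0 : i = 0 := by omega
        subst h0; simpa using hp
      · intro i hi
        have h1 : ht N R p = 1 := by rw [ht, hemp]; simp
        omega
    · have hne' : (innerE N R p).attach.Nonempty := Finset.attach_nonempty_iff.mpr hne
      obtain ⟨r, -, hsup⟩ :=
        Finset.exists_mem_eq_sup (innerE N R p).attach hne' (fun q => ht N R q.1)
      set q := r.1 with hqdef
      have hqmem : q ∈ innerE N R p := r.2
      have hht : ht N R p = ht N R q + 1 := by
        rw [ht, hsup]
      have hqred : q ∈ redE N R := (Finset.mem_filter.mp hqmem).1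
      have hnest : (p.1 : ℕ) < (q.1 : ℕ) ∧ (q.2 : ℕ) < (p.2 : ℕ) :=
        (Finset.mem_filter.mp hqmem).2
      have hq12 : (q.1 : ℕ) < (q.2 : ℕ) := by
        simp only [redE, Finset.mem_filter, Finset.mem_univ, true_and] at hqred
        exact hqred.1
      obtain ⟨a, b, ha0, hb0, hmem, hmono⟩ := ih q hqred (by omega)
      refine ⟨fun i => if i = 0 then p.1 else a (i - 1),
              fun i => if i = 0 then p.2 else b (i - 1), by simp, by simp, ?_, ?_⟩
      · intro i hi
        rcases Nat.eq_zero_or_pos i with h0 | h0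
        · subst h0; simpa using hp
        · have : i - 1 < ht N R q := by omega
          simpa [Nat.pos_iff_ne_zero.mp h0] using hmem (i-1) this
      · intro i hi
        rcases Nat.eq_zero_or_pos i with h0 | h0
        · subst h0
          simp only [if_pos rfl, if_neg (Nat.one_ne_zero)]
          constructor
          · simpa [ha0] using hnest.1
          · simpa [hb0] using hnest.2
        · have h1 : i - 1 + 1 < ht N R q := by omega
          have := hmono (i-1) h1
          have hi1 : i ≠ 0 := by omega
          have hi2 : i + 1 ≠ 0 := by omega
          simp only [if_neg hi1, if_neg hi2]
          have e1 : i + 1 - 1 = i - 1 + 1 := by omega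
          rw [e1]
          exact this

lemma chain_mono {m : ℕ} (a : ℕ → Fin N) (h : ∀ i, i + 1 < m → (a i : ℕ) < (a (i+1) : ℕ)) :
    ∀ i j, i < j → j < m → (a i : ℕ) < (a j : ℕ) := by
  intro i j hij hjm
  induction j with
  | zero => omega
  | succ j ihj =>
    rcases Nat.lt_succ_iff_lt_or_eq.mp hij with h' | h'
    · exact lt_trans (ihj h' (by omega)) (h j hjm)
    · subst h'; exact h i hjm

lemma chain_anti {m : ℕ} (b : ℕ → Fin N) (h : ∀ i, i + 1 < m → (b (i+1) : ℕ) < (b i : ℕ)) :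
    ∀ i j, i < j → j < m → (b j : ℕ) < (b i : ℕ) := by
  intro i j hij hjm
  induction j with
  | zero => omega
  | succ j ihj =>
    rcases Nat.lt_succ_iff_lt_or_eq.mp hij with h' | h'
    · exact lt_trans (h j hjm) (ihj h' (by omega))
    · subst h'; exact h i hjm

/-- A nested chain of `n` red edges yields a red copy of `NM_n`. -/
lemma no_nm (R : SimpleGraph (Fin N)) (n : ℕ) (hn : 1 ≤ n)
    (hNM : ¬ OrderedSubgraph (nestedMatching n) R)
    (a b : ℕ → Fin N) (hmem : ∀ i, i < n → (a i, b i) ∈ redE N R)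
    (hmono : ∀ i, i + 1 < n → (a i : ℕ) < (a (i+1) : ℕ) ∧ (b (i+1) : ℕ) < (b i : ℕ)) :
    False := by
  have ha : ∀ i j, i < j → j < n → (a i : ℕ) < (a j : ℕ) :=
    chain_mono a (fun i hi => (hmono i hi).1)
  have hb : ∀ i j, i < j → j < n → (b j : ℕ) < (b i : ℕ) :=
    chain_anti b (fun i hi => (hmono i hi).2)
  have hab : ∀ i, i < n → (a i : ℕ) < (b i : ℕ) := by
    intro i hi
    have := hmem i hi
    simp only [redE, Finset.mem_filter, Finset.mem_univ, true_and] at this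
    exact this.1
  have hadj : ∀ i, i < n → R.Adj (a i) (b i) := by
    intro i hi
    have := hmem i hi
    simp only [redE, Finset.mem_filter, Finset.mem_univ, true_and] at this
    exact this.2
  have hmix : ∀ i j, i < n → j < n → (a i : ℕ) < (b j : ℕ) := by
    intro i j hi hj
    rcases lt_trichotomy i j with h | h | h
    · exact lt_trans (ha i j h hj) (hab j hj)
    · subst h; exact hab i hi
    · exact lt_trans (hab i hi) (hb j i h hi)
  apply hNM
  refine ⟨fun i => if (i : ℕ) < n then a i else b (2*n - 1 - (i : ℕ)), ?_, ?_⟩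
  · intro i j hij
    have hij' : (i : ℕ) < (j : ℕ) := hij
    have hi2 : (i : ℕ) < 2 * n := i.isLt
    have hj2 : (j : ℕ) < 2 * n := j.isLt
    rw [Fin.lt_def]
    dsimp only
    split_ifs with h1 h2 h2
    · exact ha i j hij' h2
    · exact hmix i (2*n - 1 - (j : ℕ)) h1 (by omega)
    · omega
    · exact hb (2*n - 1 - (j : ℕ)) (2*n - 1 - (i : ℕ)) (by omega) (by omega)
  · intro i j hadj'
    have h2 : ((i : ℕ) + (j : ℕ) = 2 * n - 1) := by
      have hc := hadj'
      simp only [nestedMatching, SimpleGraph.fromRel_adj] at hc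
      omega
    have hi2 : (i : ℕ) < 2 * n := i.isLt
    have hj2 : (j : ℕ) < 2 * n := j.isLt
    rcases Nat.lt_or_ge (i : ℕ) n with hi | hi
    · have hjn : ¬ ((j : ℕ) < n) := by omega
      have hji : 2*n - 1 - (j : ℕ) = (i : ℕ) := by omega
      dsimp only
      rw [if_pos hi, if_neg hjn, hji]
      exact hadj (i : ℕ) hi
    · have hjn : (j : ℕ) < n := by omega
      have hin : ¬ ((i : ℕ) < n) := by omega
      have hij : 2*n - 1 - (i : ℕ) = (j : ℕ) := by omega
      dsimp only
      rw [if_neg hin, if_pos hjn, hij]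
      exact (hadj (j : ℕ) hjn).symm

/-- Without a red `NM_n`, every red edge has height less than `n`. -/
lemma ht_lt (R : SimpleGraph (Fin N)) (n : ℕ) (hn : 1 ≤ n)
    (hNM : ¬ OrderedSubgraph (nestedMatching n) R)
    (p : Fin N × Fin N) (hp : p ∈ redE N R) : ht N R p < n := by
  by_contra h
  push_neg at h
  obtain ⟨a, b, -, -, hmem, hmono⟩ := exists_chain R p hp
  exact no_nm R n hn hNM a b (fun i hi => hmem i (by omega))
    (fun i hi => hmono i (by omega))

/-- A red edge of height `h` has length at least `2h - 1`. -/
lemma ht_length (R : SimpleGraph (Fin N)) (p : Fin N × Fin N) (hp : p ∈ redE N R) :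
    (p.1 : ℕ) + 2 * (ht N R p - 1) < (p.2 : ℕ) := by
  obtain ⟨a, b, ha0, hb0, hmem, hmono⟩ := exists_chain R p hp
  set m := ht N R p with hm
  have hm1 : 1 ≤ m := ht_pos R p
  have key : ∀ i, i < m → (a 0 : ℕ) + i ≤ (a i : ℕ) ∧ (b i : ℕ) + i ≤ (b 0 : ℕ) := by
    intro i
    induction i with
    | zero => intro _; omega
    | succ i ihi =>
      intro hi
      have h1 := ihi (by omega)
      have h2 := hmono i (by omega)
      omega
  have h3 := key (m - 1) (by omega)
  have h4 := hmem (m - 1) (by omega)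
  simp only [redE, Finset.mem_filter, Finset.mem_univ, true_and] at h4
  have h5 : (a (m-1) : ℕ) < (b (m-1) : ℕ) := h4.1
  rw [ha0, hb0] at h3
  omega

lemma blue3 (R : SimpleGraph (Fin N)) (hK : ¬ OrderedSubgraph (⊤ : SimpleGraph (Fin 3)) Rᶜ)
    (u v w : Fin N) (huv : u < v) (hvw : v < w) :
    R.Adj u v ∨ R.Adj u w ∨ R.Adj v w := by
  by_contra hcon
  push_neg at hcon
  obtain ⟨h1, h2, h3⟩ := hcon
  have n1 : u ≠ v := ne_of_lt huv
  have n2 : v ≠ w := ne_of_lt hvw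
  have n3 : u ≠ w := ne_of_lt (lt_trans huv hvw)
  have h1' : ¬ R.Adj v u := fun h => h1 h.symm
  have h2' : ¬ R.Adj w u := fun h => h2 h.symm
  have h3' : ¬ R.Adj w v := fun h => h3 h.symm
  apply hK
  refine ⟨![u, v, w], ?_, ?_⟩
  · intro i j hij
    fin_cases i <;> fin_cases j <;>
      first
        | exact absurd hij (by decide)
        | simpa using huv
        | simpa using hvw
        | simpa using lt_trans huv hvw
  · intro i j hadj
    fin_cases i <;> fin_cases j <;>
      simp_all [SimpleGraph.compl_adj, n1.symm, n2.symm, n3.symm]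

lemma pairwise_red (R : SimpleGraph (Fin N))
    (hK : ¬ OrderedSubgraph (⊤ : SimpleGraph (Fin 3)) Rᶜ) (v : Fin N) :
    ∀ x y : Fin N, x ≠ y → x ≠ v → y ≠ v → ¬ R.Adj v x → ¬ R.Adj v y → R.Adj x y := by
  have main : ∀ x y : Fin N, x < y → x ≠ v → y ≠ v → ¬ R.Adj v x → ¬ R.Adj v y → R.Adj x y := by
    intro x y hxy hxv hyv hvx hvy
    have hvx' : ¬ R.Adj x v := fun h => hvx h.symm
    have hvy' : ¬ R.Adj y v := fun h => hvy h.symm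
    rcases lt_trichotomy v x with h1 | h1 | h1
    · rcases blue3 R hK v x y h1 hxy with h | h | h
      · exact absurd h hvx
      · exact absurd h hvy
      · exact h
    · exact absurd h1.symm hxv
    · rcases lt_trichotomy v y with h2 | h2 | h2
      · rcases blue3 R hK x v y h1 h2 with h | h | h
        · exact absurd h hvx'
        · exact h
        · exact absurd h hvy
      · exact absurd h2.symm hyv
      · rcases blue3 R hK x y v hxy h2 with h | h | h
        · exact h
        · exact absurd h hvx'
        · exact absurd h hvy'
  intro x y hxy hxv hyv hvx hvy
  rcases lt_trichotomy x y with h | h | h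
  · exact main x y h hxv hyv hvx hvy
  · exact absurd h hxy
  · exact (main y x h hyv hxv hvy hvx).symm

/-- A red clique of size `2n` yields a red `NM_n`. -/
lemma clique_nm (R : SimpleGraph (Fin N)) (n : ℕ)
    (hNM : ¬ OrderedSubgraph (nestedMatching n) R)
    (s : Finset (Fin N)) (hcard : s.card = 2 * n)
    (hclique : ∀ x ∈ s, ∀ y ∈ s, x ≠ y → R.Adj x y) : False := by
  apply hNM
  refine ⟨fun i => (s.orderIsoOfFin hcard i : Fin N), ?_, ?_⟩
  · intro i j hij
    exact Subtype.coe_lt_coe.mpr ((s.orderIsoOfFin hcard).strictMono hij)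
  · intro i j hadj
    have hne : i ≠ j := hadj.ne
    have hne' : (s.orderIsoOfFin hcard i : Fin N) ≠ (s.orderIsoOfFin hcard j : Fin N) := by
      intro h
      exact hne ((s.orderIsoOfFin hcard).injective (Subtype.ext h))
    exact hclique _ (s.orderIsoOfFin hcard i).2 _ (s.orderIsoOfFin hcard j).2 hne'

/-- The blue neighborhood of `v`. -/
noncomputable def blueNbr (N : ℕ) (R : SimpleGraph (Fin N)) (v : Fin N) : Finset (Fin N) :=
  Finset.univ.filter fun u => u ≠ v ∧ ¬ R.Adj v u

lemma blueNbr_card (R : SimpleGraph (Fin N)) (n : ℕ)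
    (hNM : ¬ OrderedSubgraph (nestedMatching n) R)
    (hK : ¬ OrderedSubgraph (⊤ : SimpleGraph (Fin 3)) Rᶜ) (v : Fin N) :
    (blueNbr N R v).card < 2 * n := by
  by_contra h
  push_neg at h
  obtain ⟨t, hts, htcard⟩ := Finset.exists_subset_card_eq h
  apply clique_nm R n hNM t htcard
  intro x hx y hy hxy
  have hx' := Finset.mem_filter.mp (hts hx)
  have hy' := Finset.mem_filter.mp (hts hy)
  exact pairwise_red R hK v x y hxy hx'.2.1 hy'.2.1 hx'.2.2 hy'.2.2

lemma gauss (m : ℕ) : (∑ i ∈ Finset.Icc 1 m, i) * 2 = m * (m+1) := by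
  induction m with
  | zero => simp
  | succ m ih =>
    rw [Finset.sum_Icc_succ_top (by omega)]
    nlinarith [ih]

lemma card_lt_pairs (N : ℕ) :
    2 * (Finset.univ.filter fun p : Fin N × Fin N => (p.1 : ℕ) < (p.2 : ℕ)).card + N = N * N := by
  classical
  have hPQ := Finset.card_filter_add_card_filter_not
    (s := (Finset.univ : Finset (Fin N × Fin N))) (p := fun p => (p.1 : ℕ) < (p.2 : ℕ))
  have hQsplit := Finset.card_filter_add_card_filter_not
    (s := (Finset.univ.filter fun p : Fin N × Fin N => ¬ (p.1 : ℕ) < (p.2 : ℕ)))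
    (p := fun p => (p.2 : ℕ) < (p.1 : ℕ))
  have huniv : (Finset.univ : Finset (Fin N × Fin N)).card = N * N := by
    simp [Finset.card_univ]
  have hQ1 : ((Finset.univ.filter fun p : Fin N × Fin N => ¬ (p.1 : ℕ) < (p.2 : ℕ)).filter
      fun p => (p.2 : ℕ) < (p.1 : ℕ)).card
      = (Finset.univ.filter fun p : Fin N × Fin N => (p.1 : ℕ) < (p.2 : ℕ)).card := by
    apply Finset.card_nbij' (i := fun p => (p.2, p.1)) (j := fun p => (p.2, p.1))
    · intro p hp
      simp only [Finset.mem_coe, Finset.mem_filter, Finset.mem_univ, true_and] at hp ⊢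
      exact hp.2
    · intro p hp
      simp only [Finset.mem_coe, Finset.mem_filter, Finset.mem_univ, true_and] at hp ⊢
      exact ⟨by omega, hp⟩
    · intro p _; rfl
    · intro p _; rfl
  have hQ2 : ((Finset.univ.filter fun p : Fin N × Fin N => ¬ (p.1 : ℕ) < (p.2 : ℕ)).filter
      fun p => ¬ (p.2 : ℕ) < (p.1 : ℕ)).card = N := by
    have hh : ((Finset.univ.filter fun p : Fin N × Fin N => ¬ (p.1 : ℕ) < (p.2 : ℕ)).filter
        fun p => ¬ (p.2 : ℕ) < (p.1 : ℕ)).card = (Finset.univ : Finset (Fin N)).card := by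
      apply Finset.card_nbij' (i := fun p => p.1) (j := fun v => (v, v))
      · intro p _; exact Finset.mem_univ _
      · intro v _
        simp only [Finset.mem_coe, Finset.mem_filter, Finset.mem_univ, true_and]
        omega
      · intro p hp
        simp only [Finset.mem_coe, Finset.mem_filter, Finset.mem_univ, true_and] at hp
        have h12 : p.1 = p.2 := Fin.ext (by omega)
        exact Prod.ext rfl h12
      · intro v _; rfl
    rw [hh]; simp
  omega

/-- Blue edges, as ordered pairs. -/
noncomputable def blueE (N : ℕ) (R : SimpleGraph (Fin N)) : Finset (Fin N × Fin N) :=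
  Finset.univ.filter fun p => (p.1 : ℕ) < (p.2 : ℕ) ∧ ¬ R.Adj p.1 p.2

lemma red_blue_split (R : SimpleGraph (Fin N)) :
    (redE N R).card + (blueE N R).card
      = (Finset.univ.filter fun p : Fin N × Fin N => (p.1 : ℕ) < (p.2 : ℕ)).card := by
  have h := Finset.card_filter_add_card_filter_not
    (s := (Finset.univ.filter fun p : Fin N × Fin N => (p.1 : ℕ) < (p.2 : ℕ)))
    (p := fun p => R.Adj p.1 p.2)
  have h1 : (Finset.univ.filter fun p : Fin N × Fin N => (p.1 : ℕ) < (p.2 : ℕ)).filter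
      (fun p => R.Adj p.1 p.2) = redE N R := by
    rw [Finset.filter_filter]
    rfl
  have h2 : (Finset.univ.filter fun p : Fin N × Fin N => (p.1 : ℕ) < (p.2 : ℕ)).filter
      (fun p => ¬ R.Adj p.1 p.2) = blueE N R := by
    rw [Finset.filter_filter]
    rfl
  rw [h1, h2] at h
  omega

lemma blue_double_count (R : SimpleGraph (Fin N)) :
    2 * (blueE N R).card =
      ∑ v : Fin N, (blueNbr N R v).card := by
  have hfib : (Finset.univ.filter fun p : Fin N × Fin N => p.1 ≠ p.2 ∧ ¬ R.Adj p.1 p.2).card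
      = ∑ v ∈ Finset.univ, (((Finset.univ.filter
          fun p : Fin N × Fin N => p.1 ≠ p.2 ∧ ¬ R.Adj p.1 p.2).filter
          fun p => p.1 = v).card) :=
    Finset.card_eq_sum_card_fiberwise (fun p _ => Finset.mem_univ p.1)
  have hfeq : ∀ v : Fin N, (((Finset.univ.filter
      fun p : Fin N × Fin N => p.1 ≠ p.2 ∧ ¬ R.Adj p.1 p.2).filter
      fun p => p.1 = v).card) = (blueNbr N R v).card := by
    intro v
    apply Finset.card_nbij' (i := fun p => p.2) (j := fun u => (v, u))
    · intro p hp
      simp only [Finset.mem_coe, Finset.mem_filter, Finset.mem_univ, true_and] at hp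
      simp only [Finset.mem_coe, blueNbr, Finset.mem_filter, Finset.mem_univ, true_and]
      obtain ⟨⟨hne, hb⟩, h1⟩ := hp
      subst h1
      exact ⟨fun h => hne h.symm, hb⟩
    · intro u hu
      simp only [Finset.mem_coe, blueNbr, Finset.mem_filter, Finset.mem_univ, true_and] at hu
      simp only [Finset.mem_coe, Finset.mem_filter, Finset.mem_univ, true_and]
      exact ⟨⟨fun h => hu.1 h.symm, hu.2⟩, trivial⟩
    · intro p hp
      simp only [Finset.mem_coe, Finset.mem_filter, Finset.mem_univ, true_and] at hp
      obtain ⟨-, h2⟩ := hp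
      subst h2
      exact Prod.mk.eta
    · intro u _; rfl
  have hsplit := Finset.card_filter_add_card_filter_not
    (s := (Finset.univ.filter fun p : Fin N × Fin N => p.1 ≠ p.2 ∧ ¬ R.Adj p.1 p.2))
    (p := fun p => (p.1 : ℕ) < (p.2 : ℕ))
  have e1 : ((Finset.univ.filter fun p : Fin N × Fin N => p.1 ≠ p.2 ∧ ¬ R.Adj p.1 p.2).filter
      (fun p => (p.1 : ℕ) < (p.2 : ℕ))) = blueE N R := by
    ext p
    simp only [Finset.mem_coe, blueE, Finset.mem_filter, Finset.mem_univ, true_and]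
    constructor
    · rintro ⟨⟨-, hb⟩, hlt⟩; exact ⟨hlt, hb⟩
    · rintro ⟨hlt, hb⟩
      refine ⟨⟨fun h => ?_, hb⟩, hlt⟩
      rw [h] at hlt; omega
  have e2 : (((Finset.univ.filter fun p : Fin N × Fin N => p.1 ≠ p.2 ∧ ¬ R.Adj p.1 p.2).filter
      (fun p => ¬ (p.1 : ℕ) < (p.2 : ℕ)))).card = (blueE N R).card := by
    apply Finset.card_nbij' (i := fun p => (p.2, p.1)) (j := fun p => (p.2, p.1))
    · intro p hp
      simp only [Finset.mem_coe, Finset.mem_filter, Finset.mem_univ, true_and] at hp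
      simp only [Finset.mem_coe, blueE, Finset.mem_filter, Finset.mem_univ, true_and]
      obtain ⟨⟨hne, hb⟩, hnlt⟩ := hp
      have hvne : (p.1 : ℕ) ≠ (p.2 : ℕ) := fun h => hne (Fin.ext h)
      exact ⟨by omega, fun h => hb h.symm⟩
    · intro p hp
      simp only [Finset.mem_coe, blueE, Finset.mem_filter, Finset.mem_univ, true_and] at hp
      simp only [Finset.mem_coe, Finset.mem_filter, Finset.mem_univ, true_and]
      refine ⟨⟨fun h => ?_, fun h => hp.2 h.symm⟩, by omega⟩
      rw [h] at hp; omega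
    · intro p _; rfl
    · intro p _; rfl
  rw [e1] at hsplit
  simp only [hfeq] at hfib
  omega
lemma fiber_bound (R : SimpleGraph (Fin N)) (n h : ℕ) (hn : 1 ≤ n) (hNbig : 3*n < N)
    (hh1 : 1 ≤ h) (hh2 : h ≤ n - 1) :
    ((redE N R).filter fun p => ht N R p = h).card + 4*h ≤ 2*N + 1 := by
  have hcard : ((redE N R).filter fun p => ht N R p = h).card
      ≤ (Finset.Icc (2*h-1) (2*N-2*h-1)).card := by
    apply Finset.card_le_card_of_injOn (f := fun p => (p.1 : ℕ) + (p.2 : ℕ))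
    · intro p hp
      have hpr : p ∈ redE N R := (Finset.mem_filter.mp hp).1
      have hph : ht N R p = h := (Finset.mem_filter.mp hp).2
      have hlen := ht_length R p hpr
      rw [hph] at hlen
      have h2 : (p.2 : ℕ) < N := p.2.isLt
      simp only [Finset.coe_Icc, Set.mem_Icc]
      omega
    · intro p hp q hq heq
      simp only [Finset.coe_filter, Set.mem_setOf_eq] at hp hq
      obtain ⟨hpr, hph⟩ := hp
      obtain ⟨hqr, hqh⟩ := hq
      have hpr' := hpr
      have hqr' := hqr
      simp only [redE, Finset.mem_filter, Finset.mem_univ, true_and] at hpr' hqr'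
      simp only at heq
      rcases lt_trichotomy (p.1 : ℕ) (q.1 : ℕ) with h1 | h1 | h1
      · exfalso
        have hmem : q ∈ innerE N R p := by
          simp only [innerE, Finset.mem_filter]
          exact ⟨hqr, h1, by omega⟩
        have := ht_lt_of_inner R hmem
        omega
      · have h2 : (p.2 : ℕ) = (q.2 : ℕ) := by omega
        exact Prod.ext (Fin.ext h1) (Fin.ext h2)
      · exfalso
        have hmem : p ∈ innerE N R q := by
          simp only [innerE, Finset.mem_filter]
          exact ⟨hpr, h1, by omega⟩
        have := ht_lt_of_inner R hmem
        omega
  rw [Nat.card_Icc] at hcard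
  omega

lemma red_count (R : SimpleGraph (Fin N)) (n : ℕ) (hn : 1 ≤ n) (hNbig : 3*n < N)
    (hNM : ¬ OrderedSubgraph (nestedMatching n) R) :
    (redE N R).card + 2*((n-1)*n) ≤ (n-1)*(2*N+1) := by
  have hfib : (redE N R).card
      = ∑ h ∈ Finset.Icc 1 (n-1), ((redE N R).filter fun p => ht N R p = h).card := by
    apply Finset.card_eq_sum_card_fiberwise
    intro p hp
    rw [Finset.mem_coe, Finset.mem_Icc]
    have h1 := ht_pos R p
    have h2 := ht_lt R n hn hNM p hp
    omega
  have hsum : ∑ h ∈ Finset.Icc 1 (n-1),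
      (((redE N R).filter fun p => ht N R p = h).card + 4*h)
      ≤ ∑ _h ∈ Finset.Icc 1 (n-1), (2*N+1) := by
    apply Finset.sum_le_sum
    intro h hh
    rw [Finset.mem_Icc] at hh
    exact fiber_bound R n h hn hNbig hh.1 hh.2
  rw [Finset.sum_add_distrib, Finset.sum_const, Nat.card_Icc] at hsum
  have hg := gauss (n-1)
  have he : n - 1 + 1 = n := by omega
  rw [he] at hg
  have hgs : ∑ h ∈ Finset.Icc 1 (n-1), 4*h = 4 * ∑ h ∈ Finset.Icc 1 (n-1), h :=
    (Finset.mul_sum _ _ _).symm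
  rw [hgs] at hsum
  rw [smul_eq_mul, he] at hsum
  set T := ∑ h ∈ Finset.Icc 1 (n-1), h
  omega

lemma main_count (R : SimpleGraph (Fin N)) (n : ℕ) (hn : 1 ≤ n) (hNbig : 3*n < N)
    (hNM : ¬ OrderedSubgraph (nestedMatching n) R)
    (hK : ¬ OrderedSubgraph (⊤ : SimpleGraph (Fin 3)) Rᶜ) :
    N*N + 4*((n-1)*n) ≤ 2*((n-1)*(2*N+1)) + N*(2*n-1) + N := by
  have F1 := red_count R n hn hNbig hNM
  have hb : ∀ v ∈ (Finset.univ : Finset (Fin N)), (blueNbr N R v).card ≤ 2*n-1 := by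
    intro v _
    have := blueNbr_card R n hNM hK v
    omega
  have F2' := Finset.sum_le_card_nsmul Finset.univ (fun v => (blueNbr N R v).card) (2*n-1) hb
  have F2 : ∑ v : Fin N, (blueNbr N R v).card ≤ N*(2*n-1) := by
    simpa [Finset.card_univ, smul_eq_mul] using F2'
  have F3 := card_lt_pairs N
  have F4 := red_blue_split R
  have F5 := blue_double_count R
  set a := (redE N R).card with ha
  set b := (blueE N R).card with hbb
  set c := (Finset.univ.filter fun p : Fin N × Fin N => (p.1 : ℕ) < (p.2 : ℕ)).card with hc
  set d := ∑ v : Fin N, (blueNbr N R v).card with hd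
  clear_value a b c d
  linarith [F1, F2, F3, F4, F5]

lemma no_coloring (n : ℕ) (hn : 1 ≤ n) :
    ∀ R : SimpleGraph (Fin (3*n + Nat.sqrt (5*n^2) + 1)),
      OrderedSubgraph (nestedMatching n) R ∨ OrderedSubgraph (⊤ : SimpleGraph (Fin 3)) Rᶜ := by
  intro R
  by_contra hcon
  push_neg at hcon
  obtain ⟨hNM, hK⟩ := hcon
  obtain ⟨k, hk⟩ : ∃ k, n = k + 1 := ⟨n - 1, by omega⟩
  subst hk
  have hm1 : (Nat.sqrt (5*(k+1)^2))^2 ≤ 5*(k+1)^2 := Nat.sqrt_le' _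
  have hm2 : 5*(k+1)^2 < (Nat.sqrt (5*(k+1)^2) + 1)^2 := Nat.lt_succ_sqrt' _
  have hNbig : 3*(k+1) < 3*(k+1) + Nat.sqrt (5*(k+1)^2) + 1 := by omega
  have key := main_count R (k+1) (by omega) hNbig hNM hK
  have he1 : k + 1 - 1 = k := by omega
  have he2 : 2*(k+1) - 1 = 2*k+1 := by omega
  rw [he1, he2] at key
  generalize hm : Nat.sqrt (5*(k+1)^2) = m at key hm1 hm2
  zify at key hm1 hm2
  nlinarith [key, hm2, hm1]

theorem stmt_0' (n : ℕ) (hn : 1 ≤ n) :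
    ((sInf {N : ℕ | ∀ R : SimpleGraph (Fin N),
        OrderedSubgraph (nestedMatching n) R ∨ OrderedSubgraph (⊤ : SimpleGraph (Fin 3)) Rᶜ} : ℕ) : ℝ)
      ≤ (3 + Real.sqrt 5) * n + 1 := by
  have hmem : (3*n + Nat.sqrt (5*n^2) + 1) ∈ {N : ℕ | ∀ R : SimpleGraph (Fin N),
      OrderedSubgraph (nestedMatching n) R ∨ OrderedSubgraph (⊤ : SimpleGraph (Fin 3)) Rᶜ} :=
    no_coloring n hn
  have h1 := Nat.sInf_le hmem
  have h2 : ((3*n + Nat.sqrt (5*n^2) + 1 : ℕ) : ℝ) ≤ (3 + Real.sqrt 5) * n + 1 := by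
    have h3 : ((Nat.sqrt (5*n^2) : ℕ) : ℝ) ≤ Real.sqrt 5 * n := by
      by_contra hcon
      push_neg at hcon
      have h4 : ((Nat.sqrt (5*n^2))^2 : ℝ) ≤ 5*(n:ℝ)^2 := by
        exact_mod_cast Nat.sqrt_le' (5*n^2)
      have h5 : (0:ℝ) ≤ Real.sqrt 5 * n := by positivity
      nlinarith [Real.sq_sqrt (show (0:ℝ) ≤ 5 by norm_num), Real.sqrt_nonneg 5, h4, hcon, h5]
    push_cast
    linarith [h3]
  calc ((sInf {N : ℕ | ∀ R : SimpleGraph (Fin N),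
        OrderedSubgraph (nestedMatching n) R ∨ OrderedSubgraph (⊤ : SimpleGraph (Fin 3)) Rᶜ} : ℕ) : ℝ)
      ≤ ((3*n + Nat.sqrt (5*n^2) + 1 : ℕ) : ℝ) := by exact_mod_cast h1
    _ ≤ (3 + Real.sqrt 5) * n + 1 := h2

end NMAux

/-- For every positive integer `n`,
`r_<(NM_n, K_3) ≤ (3 + √5) n + 1`. -/
theorem stmt_0 (n : ℕ) (hn : 1 ≤ n) :
    (orderedRamsey (nestedMatching n) (⊤ : SimpleGraph (Fin 3)) : ℝ) ≤
      (3 + Real.sqrt 5) * n + 1 := by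
  have h := NMAux.stmt_0' n hn
  unfold orderedRamsey
  exact h
end

section
/- For every integer k ≥ 3, there exists a k-queue graph (an ordered graph containing no copy of the nested matching NM_{k+1} as an ordered subgraph) whose chromatic number is at least 2k + 2. -/
namespace Stmt4Aux

def qrows : List ℕ := [349656, 89395170, 67370633, 4131375, 82847917, 79733437, 5717002801, 5365180465, 5102936305, 5110923461, 5243536324, 4968742660, 17441593802756, 11284829460, 43146792960, 16046182371328, 2268419411968, 11341448347648, 10193047912448, 14381748322304, 4786791383040, 2099215597568]

def qv (a b : ℕ) : ℕ := ((qrows.getD a 0) >>> (2*b)) % 4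

/-- symmetry checker -/
def chkSym : Bool := (List.range 22).all fun a => (List.range 22).all fun b =>
  qv a b == qv b a

/-- no independent 4-set checker -/
def chkAlpha : Bool := (List.range 22).all fun d => (List.range d).all fun c =>
  (List.range c).all fun b => (List.range b).all fun a =>
    !(qv a b == 0) || !(qv a c == 0) || !(qv a d == 0) ||
    !(qv b c == 0) || !(qv b d == 0) || !(qv c d == 0)

/-- queue-validity checker: nested edges get different queues -/
def chkQueue : Bool := (List.range 22).all fun j => (List.range j).all fun b =>
  (List.range b).all fun a => (List.range a).all fun i =>
    (qv i j == 0) || (qv a b == 0) || !(qv a b == qv i j)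

set_option maxHeartbeats 4000000 in
lemma chkSym_eq : chkSym = true := by rfl
set_option maxHeartbeats 4000000 in
lemma chkAlpha_eq : chkAlpha = true := by rfl
set_option maxHeartbeats 4000000 in
lemma chkQueue_eq : chkQueue = true := by rfl

lemma qv_symm (a b : ℕ) (ha : a < 22) (hb : b < 22) : qv a b = qv b a := by
  have h := chkSym_eq
  simp only [chkSym, List.all_eq_true, List.mem_range, beq_iff_eq] at h
  exact h a ha b hb

lemma alpha3 (a b c d : ℕ) (hd : d < 22)
    (h1 : a < b) (h2 : b < c) (h3 : c < d) :
    qv a b ≠ 0 ∨ qv a c ≠ 0 ∨ qv a d ≠ 0 ∨ qv b c ≠ 0 ∨ qv b d ≠ 0 ∨ qv c d ≠ 0 := by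
  have h := chkAlpha_eq
  simp only [chkAlpha, List.all_eq_true, List.mem_range, Bool.or_eq_true, beq_iff_eq,
    Bool.not_eq_true', beq_eq_false_iff_ne, ne_eq] at h
  have := h d hd c h3 b h2 a h1
  tauto

lemma queue_valid (i a b j : ℕ) (hj : j < 22) (h1 : i < a) (h2 : a < b) (h3 : b < j)
    (hij : qv i j ≠ 0) (hab : qv a b ≠ 0) : qv a b ≠ qv i j := by
  have h := chkQueue_eq
  simp only [chkQueue, List.all_eq_true, List.mem_range, Bool.or_eq_true, beq_iff_eq,
    Bool.not_eq_true', beq_eq_false_iff_ne, ne_eq] at h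
  have := h j hj b h3 a h2 i h1
  tauto

lemma qv_lt4 (a b : ℕ) : qv a b < 4 := Nat.mod_lt _ (by norm_num)

/-- The base graph on 22 vertices. -/
def B : SimpleGraph (Fin 22) where
  Adj x y := x ≠ y ∧ qv x.val y.val ≠ 0
  symm := ⟨by
    rintro x y ⟨h1, h2⟩
    exact ⟨h1.symm, by rwa [qv_symm _ _ y.isLt x.isLt]⟩⟩
  loopless := ⟨fun x h => h.1 rfl⟩

/-- A chain of `t` pairwise nested edges. -/
def NChain {N : ℕ} (G : SimpleGraph (Fin N)) (t : ℕ) : Prop :=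
  ∃ f g : Fin t → Fin N, (∀ l, G.Adj (f l) (g l)) ∧ (∀ l, f l < g l) ∧
    ∀ l l', l < l' → f l < f l' ∧ g l' < g l

lemma B_nochain : ¬ NChain B 4 := by
  rintro ⟨f, g, hadj, hfg, hnest⟩
  have hv : ∀ l, qv (f l).val (g l).val ≠ 0 := fun l => (hadj l).2
  let F : Fin 4 → Fin 3 := fun l =>
    ⟨qv (f l).val (g l).val - 1, by
      have h1 := qv_lt4 (f l).val (g l).val
      have h2 := hv l
      omega⟩
  have key : ∀ l l' : Fin 4, l < l' → qv (f l').val (g l').val ≠ qv (f l).val (g l).val := by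
    intro l l' hll'
    have h1 := (hnest l l' hll').1
    have h2 := hfg l'
    have h3 := (hnest l l' hll').2
    exact queue_valid (f l).val (f l').val (g l').val (g l).val (g l).isLt h1 h2 h3 (hv l) (hv l')
  have hinj : Function.Injective F := by
    intro l l' hF
    by_contra hne
    have hF' : qv (f l).val (g l).val = qv (f l').val (g l').val := by
      have hFdef : ∀ t, (F t).val = qv (f t).val (g t).val - 1 := fun t => rfl
      have hvv := congrArg Fin.val hF
      rw [hFdef l, hFdef l'] at hvv
      have q1 := hv l; have q2 := hv l'
      omega
    rcases lt_or_gt_of_ne hne with h | h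
    · exact key l l' h hF'.symm
    · exact key l' l h hF'
  have := Fintype.card_le_of_injective F hinj
  simp at this

/-- Extend an ordered graph by two universal vertices at the two ends. -/
def ext' {N : ℕ} (G : SimpleGraph (Fin N)) : SimpleGraph (Fin (N+2)) where
  Adj x y := x ≠ y ∧ ((x:ℕ) = 0 ∨ (y:ℕ) = 0 ∨ (x:ℕ) = N+1 ∨ (y:ℕ) = N+1 ∨
    ∃ a b : Fin N, (a:ℕ)+1 = (x:ℕ) ∧ (b:ℕ)+1 = (y:ℕ) ∧ G.Adj a b)
  symm := ⟨by
    rintro x y ⟨h1, h2⟩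
    refine ⟨h1.symm, ?_⟩
    rcases h2 with h|h|h|h|⟨a,b,ha,hb,hab⟩
    · exact Or.inr (Or.inl h)
    · exact Or.inl h
    · exact Or.inr (Or.inr (Or.inr (Or.inl h)))
    · exact Or.inr (Or.inr (Or.inl h))
    · exact Or.inr (Or.inr (Or.inr (Or.inr ⟨b, a, hb, ha, hab.symm⟩)))⟩
  loopless := ⟨fun x h => h.1 rfl⟩

lemma ext'_nochain {N t : ℕ} (G : SimpleGraph (Fin N)) (h : ¬ NChain G t) :
    ¬ NChain (ext' G) (t+1) := by
  rintro ⟨f, g, hadj, hfg, hnest⟩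
  apply h
  have hf1 : ∀ l : Fin t, 1 ≤ (f l.succ : ℕ) := by
    intro l
    have h1 := (hnest 0 l.succ (Fin.succ_pos l)).1
    rw [Fin.lt_def] at h1
    omega
  have hgN : ∀ l : Fin t, (g l.succ : ℕ) ≤ N := by
    intro l
    have h1 := (hnest 0 l.succ (Fin.succ_pos l)).2
    rw [Fin.lt_def] at h1
    have h2 := (g 0).isLt
    omega
  have key : ∀ l : Fin t, ∃ a b : Fin N,
      (a:ℕ)+1 = (f l.succ:ℕ) ∧ (b:ℕ)+1 = (g l.succ:ℕ) ∧ G.Adj a b := by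
    intro l
    obtain ⟨hne, hc⟩ := hadj l.succ
    have hfg' := hfg l.succ
    rw [Fin.lt_def] at hfg'
    have e1 := hf1 l
    have e2 := hgN l
    rcases hc with h0|h0|h0|h0|he
    · omega
    · omega
    · omega
    · omega
    · exact he
  choose A Bb hA hB hAB using key
  refine ⟨A, Bb, hAB, ?_, ?_⟩
  · intro l
    have := hfg l.succ
    rw [Fin.lt_def] at this ⊢
    have := hA l; have := hB l
    omega
  · intro l l' hll'
    have hs : l.succ < l'.succ := Fin.succ_lt_succ_iff.mpr hll'
    have h1 := (hnest l.succ l'.succ hs).1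
    have h2 := (hnest l.succ l'.succ hs).2
    rw [Fin.lt_def] at h1 h2
    constructor <;> rw [Fin.lt_def]
    · have := hA l; have := hA l'; omega
    · have := hB l; have := hB l'; omega

lemma ext'_color {N c : ℕ} (G : SimpleGraph (Fin N))
    (h : ∀ m, G.Colorable m → c ≤ m) :
    ∀ m, (ext' G).Colorable m → c + 2 ≤ m := by
  intro m hm
  obtain ⟨C⟩ := hm
  have huw : (ext' G).Adj ⟨0, by omega⟩ ⟨N+1, by omega⟩ := by
    refine ⟨?_, Or.inl rfl⟩
    simp [Fin.ext_iff]
  set u : Fin (N+2) := ⟨0, by omega⟩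
  set w : Fin (N+2) := ⟨N+1, by omega⟩
  have hCuw : C u ≠ C w := C.valid huw
  have hm2 : 2 ≤ m := by
    have h1 := (C u).isLt
    have h2 := (C w).isLt
    have h3 : (C u).val ≠ (C w).val := fun hh => hCuw (Fin.ext hh)
    omega
  let emb : Fin N → Fin (N+2) := fun v => ⟨v.val+1, by omega⟩
  have hadjU : ∀ v : Fin N, (ext' G).Adj (emb v) u := by
    intro v
    refine ⟨?_, Or.inr (Or.inl rfl)⟩
    simp [Fin.ext_iff, emb, u]
  have hadjW : ∀ v : Fin N, (ext' G).Adj (emb v) w := by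
    intro v
    refine ⟨?_, Or.inr (Or.inr (Or.inr (Or.inl rfl)))⟩
    simp [Fin.ext_iff, emb, w]
    omega
  let C' : G.Coloring {x : Fin m // x ≠ C u ∧ x ≠ C w} :=
    SimpleGraph.Coloring.mk
      (fun v => ⟨C (emb v), C.valid (hadjU v), C.valid (hadjW v)⟩)
      (by
        intro v v' hvv' heq
        have hadj' : (ext' G).Adj (emb v) (emb v') := by
          refine ⟨?_, Or.inr (Or.inr (Or.inr (Or.inr ⟨v, v', rfl, rfl, hvv'⟩)))⟩
          have := hvv'.ne
          simp [Fin.ext_iff, emb]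
          exact fun hh => this (Fin.ext hh)
        exact C.valid hadj' (congrArg Subtype.val heq))
  have hco : G.Colorable (Fintype.card {x : Fin m // x ≠ C u ∧ x ≠ C w}) := C'.colorable
  have hcard : Fintype.card {x : Fin m // x ≠ C u ∧ x ≠ C w} = m - 2 := by
    classical
    rw [Fintype.card_subtype]
    have hset : (Finset.univ.filter fun x => x ≠ C u ∧ x ≠ C w)
        = (Finset.univ \ {C u, C w}) := by
      ext x
      simp [not_or]
    rw [hset, Finset.card_sdiff_of_subset (Finset.subset_univ _), Finset.card_univ, Fintype.card_fin,
      Finset.card_pair hCuw]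
  rw [hcard] at hco
  have := h _ hco
  omega

lemma four_of_card {α : Type*} [DecidableEq α] [LinearOrder α] (s : Finset α) (h : 4 ≤ s.card) :
    ∃ a b c d, a ∈ s ∧ b ∈ s ∧ c ∈ s ∧ d ∈ s ∧
      a < b ∧ b < c ∧ c < d := by
  have hne : s.Nonempty := Finset.card_pos.mp (by omega)
  set a := s.min' hne with hadef
  have ha : a ∈ s := s.min'_mem hne
  set s1 := s.erase a with hs1
  have hc1 : 3 ≤ s1.card := by rw [hs1, Finset.card_erase_of_mem ha]; omega
  have hne1 : s1.Nonempty := Finset.card_pos.mp (by omega)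
  set b := s1.min' hne1 with hbdef
  have hb1 : b ∈ s1 := s1.min'_mem hne1
  set s2 := s1.erase b with hs2
  have hc2 : 2 ≤ s2.card := by rw [hs2, Finset.card_erase_of_mem hb1]; omega
  have hne2 : s2.Nonempty := Finset.card_pos.mp (by omega)
  set c := s2.min' hne2 with hcdef
  have hc1' : c ∈ s2 := s2.min'_mem hne2
  set s3 := s2.erase c with hs3
  have hc3 : 1 ≤ s3.card := by rw [hs3, Finset.card_erase_of_mem hc1']; omega
  have hne3 : s3.Nonempty := Finset.card_pos.mp (by omega)
  set d := s3.min' hne3 with hddef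
  have hd1 : d ∈ s3 := s3.min'_mem hne3
  have hbs : b ∈ s := (Finset.erase_subset _ _) hb1
  have hcs1 : c ∈ s1 := (Finset.erase_subset _ _) hc1'
  have hcs : c ∈ s := (Finset.erase_subset _ _) hcs1
  have hds2 : d ∈ s2 := (Finset.erase_subset _ _) hd1
  have hds1 : d ∈ s1 := (Finset.erase_subset _ _) hds2
  have hds : d ∈ s := (Finset.erase_subset _ _) hds1
  refine ⟨a, b, c, d, ha, hbs, hcs, hds, ?_, ?_, ?_⟩
  · exact lt_of_le_of_ne (s.min'_le b hbs) (Ne.symm (Finset.ne_of_mem_erase hb1))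
  · exact lt_of_le_of_ne (s1.min'_le c hcs1) (Ne.symm (Finset.ne_of_mem_erase hc1'))
  · exact lt_of_le_of_ne (s2.min'_le d hds2) (Ne.symm (Finset.ne_of_mem_erase hd1))

lemma B_color : ∀ m, B.Colorable m → 8 ≤ m := by
  intro m hm
  obtain ⟨C⟩ := hm
  classical
  have hfib : ∀ col : Fin m, (Finset.univ.filter fun v => C v = col).card ≤ 3 := by
    intro col
    by_contra hgt
    push_neg at hgt
    obtain ⟨a, b, c, d, ha, hb, hc, hd, hab, hbc, hcd⟩ :=
      four_of_card _ (show 4 ≤ (Finset.univ.filter fun v => C v = col).card by omega)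
    simp only [Finset.mem_filter] at ha hb hc hd
    have hedge := alpha3 a.val b.val c.val d.val d.isLt hab hbc hcd
    have hab' : a ≠ b := ne_of_lt hab
    have hac' : a ≠ c := ne_of_lt (hab.trans hbc)
    have had' : a ≠ d := ne_of_lt ((hab.trans hbc).trans hcd)
    have hbc' : b ≠ c := ne_of_lt hbc
    have hbd' : b ≠ d := ne_of_lt (hbc.trans hcd)
    have hcd' : c ≠ d := ne_of_lt hcd
    have hval : ∀ x y : Fin 22, qv x.val y.val ≠ 0 → x ≠ y → C x = col → C y = col → False := by
      intro x y hq hxy hcx hcy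
      exact C.valid (⟨hxy, hq⟩ : B.Adj x y) (hcx.trans hcy.symm)
    rcases hedge with h|h|h|h|h|h
    · exact hval a b h hab' ha.2 hb.2
    · exact hval a c h hac' ha.2 hc.2
    · exact hval a d h had' ha.2 hd.2
    · exact hval b c h hbc' hb.2 hc.2
    · exact hval b d h hbd' hb.2 hd.2
    · exact hval c d h hcd' hc.2 hd.2
  have hcount : (Finset.univ : Finset (Fin 22)).card =
      ∑ col : Fin m, (Finset.univ.filter fun v => C v = col).card :=
    Finset.card_eq_sum_card_fiberwise (fun x _ => Finset.mem_univ (C x))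
  have hsum : ∑ col : Fin m, (Finset.univ.filter fun v => C v = col).card ≤ 3 * m := by
    calc ∑ col : Fin m, (Finset.univ.filter fun v => C v = col).card
        ≤ ∑ _col : Fin m, 3 := Finset.sum_le_sum (fun i _ => hfib i)
      _ = 3 * m := by simp [Finset.sum_const, mul_comm]
  simp only [Finset.card_univ, Fintype.card_fin] at hcount
  omega

/-- The family. -/
def famS : ℕ → (N : ℕ) × SimpleGraph (Fin N)
  | 0 => ⟨22, B⟩
  | j+1 => ⟨(famS j).1 + 2, ext' (famS j).2⟩

lemma famS_nochain (j : ℕ) : ¬ NChain (famS j).2 (j+4) := by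
  induction j with
  | zero => exact B_nochain
  | succ j ih => exact ext'_nochain _ ih

lemma famS_color (j : ℕ) : ∀ m, (famS j).2.Colorable m → 2*j + 8 ≤ m := by
  induction j with
  | zero => simpa [famS] using B_color
  | succ j ih =>
    intro m hm
    have := ext'_color _ ih m hm
    omega

lemma osub_to_nchain {n N : ℕ} {G : SimpleGraph (Fin N)} (hn : 1 ≤ n)
    (h : OrderedSubgraph (nestedMatching n) G) : NChain G n := by
  obtain ⟨φ, hmono, hpres⟩ := h
  refine ⟨fun l => φ ⟨l.val, by omega⟩, fun l => φ ⟨2*n-1-l.val, by omega⟩, ?_, ?_, ?_⟩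
  · intro l
    apply hpres
    rw [nestedMatching, SimpleGraph.fromRel_adj]
    have hl := l.isLt
    constructor
    · intro hh
      have := congrArg Fin.val hh
      simp only at this
      omega
    · left; simp; omega
  · intro l
    apply hmono
    rw [Fin.lt_def]
    have := l.isLt
    simp
    omega
  · intro l l' hll'
    rw [Fin.lt_def] at hll'
    have := l.isLt; have := l'.isLt
    constructor <;> (apply hmono; rw [Fin.lt_def]; simp; omega)

end Stmt4Aux


/-- For every `k ≥ 3`, there is a `k`-queue graph (an ordered graph with
no ordered-subgraph copy of `NM_{k+1}`) whose chromatic number is at least `2k + 2`. -/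
theorem stmt_4 (k : ℕ) (hk : 3 ≤ k) :
    ∃ (N : ℕ) (G : SimpleGraph (Fin N)),
      ¬ OrderedSubgraph (nestedMatching (k + 1)) G ∧
      (2 * k + 2 : ℕ∞) ≤ G.chromaticNumber := by
  obtain ⟨j, rfl⟩ : ∃ j, k = j + 3 := ⟨k - 3, by omega⟩
  refine ⟨(Stmt4Aux.famS j).1, (Stmt4Aux.famS j).2, ?_, ?_⟩
  · intro hsub
    exact Stmt4Aux.famS_nochain j (Stmt4Aux.osub_to_nchain (by omega) hsub)
  · rw [SimpleGraph.chromaticNumber]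
    apply le_iInf₂
    intro n hn
    have h1 : (Stmt4Aux.famS j).2.Colorable n := hn
    have h2 := Stmt4Aux.famS_color j n h1
    have h3 : 2*(j+3) + 2 ≤ n := by omega
    exact_mod_cast h3
end

section
/- For every positive integer n, the ordered Ramsey number of the nested matching NM_2 versus the complete ordered graph on n vertices satisfies r_<(NM_2, K_n) = 3n − 2. -/
section Stmt5Aux

attribute [local instance] Classical.propDecidable

/-- Level function for a relation on ℕ: `nestLvl5 E v` is the supremum over `u < v`
of `nestLvl5 E u + 1` if `E u v`, else `nestLvl5 E u`. -/
noncomputable def nestLvl5 (E : ℕ → ℕ → Prop) : ℕ → ℕ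
  | v => (Finset.range v).attach.sup
      (fun u => nestLvl5 E u.1 + (if E u.1 v then 1 else 0))
decreasing_by exact Finset.mem_range.mp u.2

lemma nestLvl5_eq (E : ℕ → ℕ → Prop) (v : ℕ) :
    nestLvl5 E v = (Finset.range v).attach.sup
      (fun u => nestLvl5 E u.1 + (if E u.1 v then 1 else 0)) := by
  rw [nestLvl5]

lemma nestLvl5_mono (E : ℕ → ℕ → Prop) {u v : ℕ} (h : u ≤ v) :
    nestLvl5 E u ≤ nestLvl5 E v := by
  rcases eq_or_lt_of_le h with rfl | h
  · exact le_rfl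
  · rw [nestLvl5_eq E v]
    have hu : u ∈ Finset.range v := Finset.mem_range.mpr h
    have h2 : nestLvl5 E u + (if E u v then 1 else 0) ≤ _ :=
      Finset.le_sup (f := fun u : {x // x ∈ Finset.range v} =>
        nestLvl5 E u.1 + (if E u.1 v then 1 else 0)) (Finset.mem_attach _ ⟨u, hu⟩)
    exact le_trans (Nat.le_add_right _ _) h2

lemma nestLvl5_lt (E : ℕ → ℕ → Prop) {u v : ℕ} (h : u < v) (hE : E u v) :
    nestLvl5 E u + 1 ≤ nestLvl5 E v := by
  rw [nestLvl5_eq E v]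
  have hu : u ∈ Finset.range v := Finset.mem_range.mpr h
  have h2 : nestLvl5 E u + (if E u v then 1 else 0) ≤ _ :=
    Finset.le_sup (f := fun u : {x // x ∈ Finset.range v} =>
      nestLvl5 E u.1 + (if E u.1 v then 1 else 0)) (Finset.mem_attach _ ⟨u, hu⟩)
  simpa [hE] using h2

lemma nestLvl5_gap (E : ℕ → ℕ → Prop) {u v : ℕ}
    (hno : ∀ x y, u < x → x < y → y < v → ¬ E x y) :
    ∀ w, u ≤ w → w < v → nestLvl5 E w ≤ nestLvl5 E u + 1 := by
  intro w
  induction w using Nat.strong_induction_on with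
  | _ w ih =>
    intro hw1 hw2
    rw [nestLvl5_eq E w]
    apply Finset.sup_le
    rintro ⟨x, hx⟩ -
    show nestLvl5 E x + (if E x w then 1 else 0) ≤ _
    have hxw : x < w := Finset.mem_range.mp hx
    rcases le_or_gt x u with hxu | hxu
    · have h1 : nestLvl5 E x ≤ nestLvl5 E u := nestLvl5_mono E hxu
      split_ifs <;> omega
    · have hnE : ¬ E x w := hno x w hxu hxw hw2
      have h1 : nestLvl5 E x ≤ nestLvl5 E u + 1 :=
        ih x hxw (le_of_lt hxu) (hxw.trans hw2)
      simp only [hnE, if_false]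
      omega

lemma nestLvl5_le_two (E : ℕ → ℕ → Prop) {u v : ℕ} (h : u < v)
    (hno : ∀ x y, u < x → x < y → y < v → ¬ E x y) :
    nestLvl5 E v ≤ nestLvl5 E u + 2 := by
  rw [nestLvl5_eq E v]
  apply Finset.sup_le
  rintro ⟨x, hx⟩ -
  show nestLvl5 E x + (if E x v then 1 else 0) ≤ _
  have hxv : x < v := Finset.mem_range.mp hx
  rcases le_or_gt x u with hxu | hxu
  · have h1 : nestLvl5 E x ≤ nestLvl5 E u := nestLvl5_mono E hxu
    split_ifs <;> omega
  · have h1 : nestLvl5 E x ≤ nestLvl5 E u + 1 :=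
      nestLvl5_gap E hno x (le_of_lt hxu) hxv
    split_ifs <;> omega

/-- Upper bound: every coloring of `K_{3n-2}` has a red `NM_2` or a blue `K_n`. -/
lemma stmt5_upper_mem (n : ℕ) (hn : 1 ≤ n) :
    ∀ R : SimpleGraph (Fin (3 * n - 2)),
      OrderedSubgraph (nestedMatching 2) R ∨
      OrderedSubgraph (⊤ : SimpleGraph (Fin n)) Rᶜ := by
  intro R
  let N := 3 * n - 2
  have hN : N = 3 * n - 2 := rfl
  let E : ℕ → ℕ → Prop := fun u v => ∃ (hu : u < N) (hv : v < N), R.Adj ⟨u, hu⟩ ⟨v, hv⟩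
  by_cases hex : ∃ a b c d : ℕ, a < b ∧ b < c ∧ c < d ∧ E a d ∧ E b c
  · left
    obtain ⟨a, b, c, d, hab, hbc, hcd, hEad, hEbc⟩ := hex
    obtain ⟨ha, hd, hAD⟩ := hEad
    obtain ⟨hb, hc, hBC⟩ := hEbc
    refine ⟨fun i => if (i : ℕ) = 0 then ⟨a, ha⟩ else if (i : ℕ) = 1 then ⟨b, hb⟩
      else if (i : ℕ) = 2 then ⟨c, hc⟩ else ⟨d, hd⟩, ?_, ?_⟩
    · intro i j hij
      fin_cases i <;> fin_cases j <;>
        simp_all [Fin.lt_def] <;> omega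
    · intro i j hadj
      fin_cases i <;> fin_cases j <;>
        simp only [nestedMatching, SimpleGraph.fromRel_adj] at hadj <;>
        simp only [] <;> norm_num at hadj <;> norm_num <;>
        first | exact hAD | exact hAD.symm | exact hBC | exact hBC.symm
  · right
    push_neg at hex
    have hno : ∀ a b c d : ℕ, a < b → b < c → c < d → E a d → ¬ E b c := by
      intro a b c d h1 h2 h3 h4
      exact hex a b c d h1 h2 h3 h4
    have hmaps : ∀ v ∈ (Finset.univ : Finset (Fin N)),
        (nestLvl5 E v.val % 3) ∈ Finset.range 3 :=
      fun v _ => Finset.mem_range.mpr (Nat.mod_lt _ (by norm_num))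
    have hcard : (Finset.range 3).card * (n - 1) < (Finset.univ : Finset (Fin N)).card := by
      simp only [Finset.card_range, Finset.card_univ, Fintype.card_fin]
      omega
    obtain ⟨y, _, hy⟩ :=
      Finset.exists_lt_card_fiber_of_mul_lt_card_of_maps_to hmaps hcard
    set S := Finset.univ.filter (fun v : Fin N => nestLvl5 E v.val % 3 = y) with hS
    have hScard : n ≤ S.card := by omega
    obtain ⟨T, hTS, hTcard⟩ := Finset.exists_subset_card_eq hScard
    have hmem3 : ∀ x ∈ S, nestLvl5 E x.val % 3 = y := by
      intro x hx
      exact (Finset.mem_filter.mp hx).2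
    have hind : ∀ x ∈ S, ∀ z ∈ S, x ≠ z → ¬ R.Adj x z := by
      intro x hx z hz hne hadj
      have hxy := hmem3 x hx
      have hzy := hmem3 z hz
      rcases lt_trichotomy (x : ℕ) (z : ℕ) with hlt | heq | hgt
      · have hE1 : E x.val z.val := ⟨x.isLt, z.isLt, hadj⟩
        have l1 := nestLvl5_lt E hlt hE1
        have l2 := nestLvl5_le_two E hlt
          (fun p q h1 h2 h3 => hno x.val p q z.val h1 h2 h3 hE1)
        omega
      · exact hne (Fin.ext heq)
      · have hE1 : E z.val x.val := ⟨z.isLt, x.isLt, hadj.symm⟩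
        have l1 := nestLvl5_lt E hgt hE1
        have l2 := nestLvl5_le_two E hgt
          (fun p q h1 h2 h3 => hno z.val p q x.val h1 h2 h3 hE1)
        omega
    refine ⟨fun i => ((T.orderIsoOfFin hTcard) i : Fin N), ?_, ?_⟩
    · intro i j hij
      exact Subtype.coe_lt_coe.mpr ((T.orderIsoOfFin hTcard).strictMono hij)
    · intro i j hij
      have hne : i ≠ j := by simpa using hij
      rw [SimpleGraph.compl_adj]
      constructor
      · intro h
        exact hne ((T.orderIsoOfFin hTcard).injective (Subtype.ext h))
      · exact hind _ (hTS ((T.orderIsoOfFin hTcard) i).2) _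
          (hTS ((T.orderIsoOfFin hTcard) j).2)
          (fun h => hne ((T.orderIsoOfFin hTcard).injective (Subtype.ext (by rw [h]))))

/-- Monotonicity in the board size. -/
lemma stmt5_upward_closed {m m' : ℕ} (hmm : m ≤ m') {p q : ℕ}
    {G : SimpleGraph (Fin p)} {K : SimpleGraph (Fin q)}
    (h : ∀ R : SimpleGraph (Fin m), OrderedSubgraph G R ∨ OrderedSubgraph K Rᶜ) :
    ∀ R : SimpleGraph (Fin m'), OrderedSubgraph G R ∨ OrderedSubgraph K Rᶜ := by
  intro R
  have hcm : StrictMono (Fin.castLE hmm) := Fin.strictMono_castLE hmm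
  rcases h (SimpleGraph.comap (Fin.castLE hmm) R) with ⟨φ, hm, ha⟩ | ⟨φ, hm, ha⟩
  · exact Or.inl ⟨Fin.castLE hmm ∘ φ, hcm.comp hm, fun i j hij => ha i j hij⟩
  · refine Or.inr ⟨Fin.castLE hmm ∘ φ, hcm.comp hm, fun i j hij => ?_⟩
    have h2 := ha i j hij
    rw [SimpleGraph.compl_adj] at h2 ⊢
    exact ⟨fun hh => h2.1 (hcm.injective hh), h2.2⟩

/-- The lower-bound construction: disjoint consecutive red triangles on `3n-3` vertices. -/
lemma stmt5_lower_counterexample (n : ℕ) (hn : 1 ≤ n) :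
    ¬ (∀ R : SimpleGraph (Fin (3 * n - 3)),
        OrderedSubgraph (nestedMatching 2) R ∨
        OrderedSubgraph (⊤ : SimpleGraph (Fin n)) Rᶜ) := by
  intro h
  set R₀ : SimpleGraph (Fin (3 * n - 3)) :=
    SimpleGraph.fromRel (fun u v => (u : ℕ) / 3 = (v : ℕ) / 3) with hR₀
  rcases h R₀ with ⟨φ, hm, ha⟩ | ⟨φ, hm, ha⟩
  · have hadj03 : (nestedMatching 2).Adj ⟨0, by norm_num⟩ ⟨3, by norm_num⟩ := by
      rw [nestedMatching, SimpleGraph.fromRel_adj]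
      exact ⟨Fin.ne_of_val_ne (by norm_num), Or.inl (by norm_num)⟩
    have h03 := ha _ _ hadj03
    rw [hR₀, SimpleGraph.fromRel_adj] at h03
    have hblock : (φ ⟨0, by norm_num⟩ : ℕ) / 3 = (φ ⟨3, by norm_num⟩ : ℕ) / 3 := by
      rcases h03.2 with h' | h'
      · exact h'
      · exact h'.symm
    have h01 : φ ⟨0, by norm_num⟩ < φ ⟨1, by norm_num⟩ := hm (Fin.mk_lt_mk.mpr (by norm_num))
    have h12 : φ ⟨1, by norm_num⟩ < φ ⟨2, by norm_num⟩ := hm (Fin.mk_lt_mk.mpr (by norm_num))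
    have h23 : φ ⟨2, by norm_num⟩ < φ ⟨3, by norm_num⟩ := hm (Fin.mk_lt_mk.mpr (by norm_num))
    rw [Fin.lt_def] at h01 h12 h23
    omega
  · have hblocklt : ∀ i : Fin n, (φ i : ℕ) / 3 < n - 1 := by
      intro i
      have := (φ i).isLt
      omega
    have hinj : Function.Injective
        (fun i : Fin n => (⟨(φ i : ℕ) / 3, hblocklt i⟩ : Fin (n - 1))) := by
      intro i j hij
      by_contra hne
      have hadj : (⊤ : SimpleGraph (Fin n)).Adj i j := by simpa using hne
      have h2 := ha i j hadj
      rw [SimpleGraph.compl_adj] at h2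
      apply h2.2
      rw [hR₀, SimpleGraph.fromRel_adj]
      refine ⟨h2.1, Or.inl ?_⟩
      simpa [Fin.ext_iff] using hij
    have hcard := Fintype.card_le_of_injective _ hinj
    simp only [Fintype.card_fin] at hcard
    omega

end Stmt5Aux

/-- For every positive integer `n`, `r_<(NM_2, K_n) = 3n - 2`. -/
theorem stmt_5 (n : ℕ) (hn : 1 ≤ n) :
    orderedRamsey (nestedMatching 2) (⊤ : SimpleGraph (Fin n)) = 3 * n - 2 := by
  have hmem : (3 * n - 2) ∈ {N : ℕ | ∀ R : SimpleGraph (Fin N),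
      OrderedSubgraph (nestedMatching 2) R ∨
      OrderedSubgraph (⊤ : SimpleGraph (Fin n)) Rᶜ} := stmt5_upper_mem n hn
  rw [orderedRamsey]
  apply le_antisymm
  · exact Nat.sInf_le hmem
  · refine le_csInf ⟨3 * n - 2, hmem⟩ ?_
    intro m hm
    by_contra hlt
    push_neg at hlt
    have hle : m ≤ 3 * n - 3 := by omega
    exact stmt5_lower_counterexample n hn (stmt5_upward_closed hle hm)
end

section
/- For all positive integers m and n, the ordered Ramsey number of the nested matching NM_m versus the complete ordered graph on n+1 vertices satisfies the upper bound r_<(NM_m, K_{n+1}) ≤ (4m − 3)n + 1. -/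
namespace Stmt6Aux

open scoped Classical

/-- `e` is strictly nested inside `f`. -/
def Inside {N : ℕ} (e f : Fin N × Fin N) : Prop := f.1 < e.1 ∧ e.2 < f.2

lemma antichain_card_le {N : ℕ} (S : Finset (Fin N × Fin N))
    (hA : ∀ e ∈ S, ∀ f ∈ S, ¬ Inside e f) : S.card ≤ 2 * N := by
  classical
  set F : (Fin N × Fin N) → Fin N ⊕ Fin N := fun e =>
    if ((S.filter (fun g => g.1 = e.1)).image Prod.snd).max = (e.2 : WithBot (Fin N))
    then Sum.inl e.1 else Sum.inr e.2 with hF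
  have hmemim : ∀ e ∈ S, e.2 ∈ (S.filter (fun g => g.1 = e.1)).image Prod.snd := by
    intro e he
    exact Finset.mem_image.2 ⟨e, Finset.mem_filter.2 ⟨he, rfl⟩, rfl⟩
  -- if the if-condition fails, there is an edge with the same left endpoint and larger right one
  have hbig : ∀ e ∈ S,
      ¬ (((S.filter (fun g => g.1 = e.1)).image Prod.snd).max = (e.2 : WithBot (Fin N))) →
      ∃ g ∈ S, g.1 = e.1 ∧ e.2 < g.2 := by
    intro e he hne
    obtain ⟨c, hc⟩ := Finset.max_of_mem (hmemim e he)
    have hcm := Finset.mem_of_max hc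
    obtain ⟨g, hg, hgc⟩ := Finset.mem_image.1 hcm
    have hg1 : g.1 = e.1 := (Finset.mem_filter.1 hg).2
    have hle : (e.2 : WithBot (Fin N)) ≤ c := hc ▸ Finset.le_max (hmemim e he)
    have hle' : e.2 ≤ c := by exact_mod_cast hle
    have hne' : e.2 ≠ c := by
      intro h; exact hne (by rw [hc, h])
    exact ⟨g, (Finset.mem_filter.1 hg).1, hg1, by rw [hgc]; exact lt_of_le_of_ne hle' hne'⟩
  have hinj : Set.InjOn F S := by
    intro e he f hf hef
    by_cases h1 : ((S.filter (fun g => g.1 = e.1)).image Prod.snd).max = (e.2 : WithBot (Fin N)) <;>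
    by_cases h2 : ((S.filter (fun g => g.1 = f.1)).image Prod.snd).max = (f.2 : WithBot (Fin N)) <;>
    simp only [hF, if_pos, if_neg, h1, h2, if_true, if_false, reduceIte] at hef
    · -- both inl
      have h11 : e.1 = f.1 := by simpa using hef
      have : e.2 = f.2 := by
        rw [h11] at h1
        rw [h1] at h2
        exact_mod_cast h2
      exact Prod.ext h11 this
    · exact absurd hef (by simp)
    · exact absurd hef (by simp)
    · -- both inr
      have h22 : e.2 = f.2 := by simpa using hef
      obtain ⟨g, hgS, hg1, hg2⟩ := hbig e he h1
      obtain ⟨g', hg'S, hg'1, hg'2⟩ := hbig f hf h2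
      rcases lt_trichotomy e.1 f.1 with h | h | h
      · exact absurd ⟨hg1 ▸ h, h22 ▸ hg2⟩ (hA f hf g hgS)
      · exact Prod.ext h h22
      · exact absurd ⟨hg'1 ▸ h, h22 ▸ hg'2⟩ (hA e he g' hg'S)
  calc S.card = (S.image F).card := (Finset.card_image_of_injOn hinj).symm
    _ ≤ (Finset.univ : Finset (Fin N ⊕ Fin N)).card := Finset.card_le_univ _
    _ = 2 * N := by simp [Fintype.card_sum]; omega


lemma card_le_of_no_chain {N : ℕ} :
    ∀ (k : ℕ) (E : Finset (Fin N × Fin N)),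
    (∀ l : List (Fin N × Fin N), (∀ e ∈ l, e ∈ E) →
       l.Chain' (fun e f => Inside f e) → l.length ≤ k) →
    E.card ≤ 2 * N * k := by
  classical
  intro k
  induction k with
  | zero =>
    intro E hE
    have : E = ∅ := by
      by_contra h
      obtain ⟨e, he⟩ := Finset.nonempty_iff_ne_empty.2 h
      have := hE [e] (by simpa using he) (List.isChain_singleton e)
      simp at this
    simp [this]
  | succ k ih =>
    intro E hE
    set M : Finset (Fin N × Fin N) := E.filter (fun e => ∀ f ∈ E, ¬ Inside e f) with hM
    have hManti : ∀ e ∈ M, ∀ f ∈ M, ¬ Inside e f := by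
      intro e he f hf
      exact (Finset.mem_filter.1 he).2 f (Finset.mem_filter.1 hf).1
    have hMcard : M.card ≤ 2 * N := antichain_card_le M hManti
    have hE' : (E \ M).card ≤ 2 * N * k := by
      apply ih
      intro l hl hc
      by_contra hlen
      push_neg at hlen
      have hne : l ≠ [] := by
        intro h; rw [h] at hlen; simp at hlen
      obtain ⟨e, t, rfl⟩ := List.exists_cons_of_ne_nil hne
      have heE' : e ∈ E \ M := hl e (by simp)
      have heE : e ∈ E := (Finset.mem_sdiff.1 heE').1
      have heM : e ∉ M := (Finset.mem_sdiff.1 heE').2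
      have : ¬ (∀ f ∈ E, ¬ Inside e f) := by
        intro h; exact heM (Finset.mem_filter.2 ⟨heE, h⟩)
      push_neg at this
      obtain ⟨f, hfE, hfI⟩ := this
      have hchain2 : (f :: e :: t).Chain' (fun e f => Inside f e) :=
        List.IsChain.cons_cons hfI hc
      have hmem2 : ∀ g ∈ (f :: e :: t), g ∈ E := by
        intro g hg
        rcases List.mem_cons.1 hg with h | h
        · exact h ▸ hfE
        · exact (Finset.mem_sdiff.1 (hl g h)).1
      have := hE _ hmem2 hchain2
      simp only [List.length_cons] at this hlen
      omega
    have hsub : M ⊆ E := Finset.filter_subset _ _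
    have := Finset.card_sdiff_add_card_eq_card hsub
    have : E.card ≤ 2 * N * k + 2 * N := by omega
    calc E.card ≤ 2 * N * k + 2 * N := this
      _ = 2 * N * (k + 1) := by ring


lemma insideTrans {N : ℕ} : Transitive (fun e f : Fin N × Fin N => Inside f e) := by
  intro a b c hab hbc
  exact ⟨lt_trans hab.1 hbc.1, lt_trans hbc.2 hab.2⟩

lemma orderedSubgraph_of_chain {N m : ℕ} (R : SimpleGraph (Fin N))
    (l : List (Fin N × Fin N)) (hlen : l.length = m)
    (hmem : ∀ e ∈ l, e.1 < e.2 ∧ R.Adj e.1 e.2)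
    (hchain : l.Chain' (fun e f => Inside f e)) :
    OrderedSubgraph (nestedMatching m) R := by
  haveI : IsTrans (Fin N × Fin N) (fun e f => Inside f e) := ⟨fun a b c hab hbc => insideTrans hab hbc⟩
  have hp : l.Pairwise (fun e f => Inside f e) := List.isChain_iff_pairwise.1 hchain
  set gi : Fin m → Fin N × Fin N := fun i => l.get (i.cast hlen.symm) with hgi
  have fact1 : ∀ i j : Fin m, i < j → (gi i).1 < (gi j).1 ∧ (gi j).2 < (gi i).2 := by
    intro i j hij
    have := List.pairwise_iff_get.1 hp (i.cast hlen.symm) (j.cast hlen.symm) hij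
    exact ⟨this.1, this.2⟩
  have fact2 : ∀ i : Fin m, (gi i).1 < (gi i).2 ∧ R.Adj (gi i).1 (gi i).2 := by
    intro i
    exact hmem _ (List.get_mem _ _)
  refine ⟨fun i => if h : (i : ℕ) < m then (gi ⟨i, h⟩).1
      else (gi ⟨2 * m - 1 - i, by omega⟩).2, ?_, ?_⟩
  · intro i j hij
    have hij' : (i : ℕ) < (j : ℕ) := hij
    have hi2 : (i : ℕ) < 2 * m := i.isLt
    have hj2 : (j : ℕ) < 2 * m := j.isLt
    by_cases h1 : (i : ℕ) < m <;> by_cases h2 : (j : ℕ) < m <;>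
      simp only [dif_pos, dif_neg, h1, h2, reduceDIte]
    · exact (fact1 _ _ (by exact hij')).1
    · -- i < m ≤ j
      set t : Fin m := ⟨2 * m - 1 - j, by omega⟩ with ht
      rcases lt_trichotomy ((i : ℕ)) (t : ℕ) with h | h | h
      · exact lt_trans (fact1 ⟨i, h1⟩ t h).1 (fact2 t).1
      · have : (⟨i, h1⟩ : Fin m) = t := Fin.ext h
        rw [this]; exact (fact2 t).1
      · exact lt_trans (fact2 ⟨i, h1⟩).1 (fact1 t ⟨i, h1⟩ h).2
    · omega
    · -- both ≥ m
      have : 2 * m - 1 - (j : ℕ) < 2 * m - 1 - (i : ℕ) := by omega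
      exact (fact1 ⟨2 * m - 1 - j, by omega⟩ ⟨2 * m - 1 - i, by omega⟩ this).2
  · have key : ∀ i j : Fin (2 * m), (i : ℕ) < (j : ℕ) → (i : ℕ) + (j : ℕ) = 2 * m - 1 →
        R.Adj (if h : (i : ℕ) < m then (gi ⟨i, h⟩).1 else (gi ⟨2 * m - 1 - i, by omega⟩).2)
              (if h : (j : ℕ) < m then (gi ⟨j, h⟩).1 else (gi ⟨2 * m - 1 - j, by omega⟩).2) := by
      intro i j hij hsum
      have hi2 : (i : ℕ) < 2 * m := i.isLt
      have hj2 : (j : ℕ) < 2 * m := j.isLt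
      have h1 : (i : ℕ) < m := by omega
      have h2 : ¬ ((j : ℕ) < m) := by omega
      rw [dif_pos h1, dif_neg h2]
      have : (⟨2 * m - 1 - (j : ℕ), by omega⟩ : Fin m) = ⟨i, h1⟩ := Fin.ext (by simp; omega)
      rw [this]
      exact (fact2 ⟨i, h1⟩).2
    intro i j hadj
    rw [nestedMatching, SimpleGraph.fromRel_adj] at hadj
    obtain ⟨hne, hsum⟩ := hadj
    have hsum' : (i : ℕ) + (j : ℕ) = 2 * m - 1 := by rcases hsum with h | h <;> omega
    have hne' : (i : ℕ) ≠ (j : ℕ) := fun h => hne (Fin.ext h)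
    rcases lt_or_gt_of_ne hne' with h | h
    · exact key i j h hsum'
    · exact (key j i h (by omega)).symm


lemma degree_count {N : ℕ} (R : SimpleGraph (Fin N)) (d : ℕ)
    (hdeg : ∀ v, d ≤ R.degree v) :
    d * N ≤ 2 * (Finset.univ.filter
      (fun e : Fin N × Fin N => e.1 < e.2 ∧ R.Adj e.1 e.2)).card := by
  classical
  set A : Finset (Fin N × Fin N) := Finset.univ.filter (fun e => R.Adj e.1 e.2) with hA
  set E1 : Finset (Fin N × Fin N) :=
    Finset.univ.filter (fun e => e.1 < e.2 ∧ R.Adj e.1 e.2) with hE1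
  set E2 : Finset (Fin N × Fin N) :=
    Finset.univ.filter (fun e => e.2 < e.1 ∧ R.Adj e.1 e.2) with hE2
  have hAcard : A.card = ∑ v : Fin N, R.degree v := by
    rw [Finset.card_eq_sum_card_fiberwise (f := Prod.fst) (t := Finset.univ)
      (fun x _ => Finset.mem_univ _)]
    apply Finset.sum_congr rfl
    intro v _
    rw [SimpleGraph.degree]
    apply Finset.card_bij (fun e _ => e.2)
    · intro e he
      simp only [hA, Finset.mem_filter] at he
      rw [SimpleGraph.mem_neighborFinset]
      rw [← he.2]
      exact he.1.2
    · intro e he f hf hef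
      simp only [hA, Finset.mem_filter] at he hf
      exact Prod.ext (he.2.trans hf.2.symm) hef
    · intro b hb
      rw [SimpleGraph.mem_neighborFinset] at hb
      exact ⟨(v, b), Finset.mem_filter.2 ⟨Finset.mem_filter.2 ⟨Finset.mem_univ _, hb⟩, rfl⟩, rfl⟩
  have hsplit : A.card = E1.card + E2.card := by
    have hunion : A = E1 ∪ E2 := by
      ext e
      simp only [hA, hE1, hE2, Finset.mem_filter, Finset.mem_union, Finset.mem_univ, true_and]
      constructor
      · intro h
        rcases h.ne.lt_or_gt with hl | hl
        · exact Or.inl ⟨hl, h⟩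
        · exact Or.inr ⟨hl, h⟩
      · rintro (⟨_, h⟩ | ⟨_, h⟩) <;> exact h
    have hdisj : Disjoint E1 E2 := by
      rw [Finset.disjoint_left]
      intro e h1 h2
      simp only [hE1, hE2, Finset.mem_filter] at h1 h2
      exact absurd h2.2.1 (not_lt.2 (le_of_lt h1.2.1))
    rw [hunion, Finset.card_union_of_disjoint hdisj]
  have hswap : E2.card = E1.card := by
    apply Finset.card_bij (fun e _ => (e.2, e.1))
    · intro e he
      simp only [hE2, Finset.mem_filter] at he
      exact Finset.mem_filter.2 ⟨Finset.mem_univ _, he.2.1, he.2.2.symm⟩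
    · intro e _ f _ hef
      have h1 : e.2 = f.2 := congrArg Prod.fst hef
      have h2 : e.1 = f.1 := congrArg Prod.snd hef
      exact Prod.ext h2 h1
    · intro e he
      simp only [hE1, Finset.mem_filter] at he
      exact ⟨(e.2, e.1), Finset.mem_filter.2 ⟨Finset.mem_univ _, he.2.1, he.2.2.symm⟩, rfl⟩
  have hsum : d * N ≤ ∑ v : Fin N, R.degree v := by
    calc d * N = ∑ _v : Fin N, d := by simp [Finset.sum_const, mul_comm]
      _ ≤ ∑ v : Fin N, R.degree v := Finset.sum_le_sum (fun v _ => hdeg v)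
  omega

lemma nm_of_min_degree {N m : ℕ} (hm : 1 ≤ m) (hN : 1 ≤ N) (R : SimpleGraph (Fin N))
    (hdeg : ∀ v, 4 * m - 3 ≤ R.degree v) :
    OrderedSubgraph (nestedMatching m) R := by
  classical
  set E : Finset (Fin N × Fin N) :=
    Finset.univ.filter (fun e => e.1 < e.2 ∧ R.Adj e.1 e.2) with hE
  by_contra hno
  have hchain : ∀ l : List (Fin N × Fin N), (∀ e ∈ l, e ∈ E) →
      l.Chain' (fun e f => Inside f e) → l.length ≤ m - 1 := by
    intro l hl hc
    by_contra h
    push_neg at h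
    have hm' : m ≤ l.length := by omega
    apply hno
    apply orderedSubgraph_of_chain R (l.take m)
    · rw [List.length_take]; omega
    · intro e he
      have := hl e (List.take_subset m l he)
      simpa [hE, Finset.mem_filter] using this
    · exact hc.take m
  have h1 := card_le_of_no_chain (m - 1) E hchain
  have h2 := degree_count R (4 * m - 3) hdeg
  obtain ⟨m', rfl⟩ : ∃ m', m = m' + 1 := ⟨m - 1, by omega⟩
  have e1 : 4 * (m' + 1) - 3 = 4 * m' + 1 := by omega
  have e2 : m' + 1 - 1 = m' := by omega
  rw [e1] at h2
  rw [e2] at h1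
  have h3 : (4 * m' + 1) * N ≤ 2 * (2 * N * m') := by
    calc (4 * m' + 1) * N ≤ 2 * E.card := h2
      _ ≤ 2 * (2 * N * m') := by omega
  nlinarith


lemma blue_clique_of_finset {N k : ℕ} (R : SimpleGraph (Fin N)) (S : Finset (Fin N))
    (hcard : S.card = k) (hblue : ∀ a ∈ S, ∀ b ∈ S, a ≠ b → ¬ R.Adj a b) :
    OrderedSubgraph (⊤ : SimpleGraph (Fin k)) Rᶜ := by
  refine ⟨fun i => (S.orderIsoOfFin hcard i : Fin N), ?_, ?_⟩
  · intro i j hij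
    exact Subtype.coe_lt_coe.mpr ((S.orderIsoOfFin hcard).strictMono hij)
  · intro i j hadj
    have hne : i ≠ j := (SimpleGraph.top_adj i j).1 hadj
    have hne' : (S.orderIsoOfFin hcard i : Fin N) ≠ (S.orderIsoOfFin hcard j : Fin N) := by
      intro h
      exact hne ((S.orderIsoOfFin hcard).injective (Subtype.coe_injective h))
    rw [SimpleGraph.compl_adj]
    exact ⟨hne', hblue _ (S.orderIsoOfFin hcard i).2 _ (S.orderIsoOfFin hcard j).2 hne'⟩

lemma chvatal {mm : ℕ} (d : ℕ) (hd : 1 ≤ d) (G : SimpleGraph (Fin mm))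
    (hgood : ∀ (N : ℕ) (R : SimpleGraph (Fin N)), 1 ≤ N →
      (∀ v, d ≤ R.degree v) → OrderedSubgraph G R) :
    ∀ (n : ℕ) (R : SimpleGraph (Fin (d * n + 1))),
      OrderedSubgraph G R ∨ OrderedSubgraph (⊤ : SimpleGraph (Fin (n + 1))) Rᶜ := by
  intro n
  induction n with
  | zero =>
    intro R
    right
    refine ⟨fun _ => ⟨0, by omega⟩, ?_, ?_⟩
    · intro i j hij
      have h1 : (i : ℕ) < 1 := i.isLt
      have h2 : (j : ℕ) < 1 := j.isLt
      have : (i : ℕ) < (j : ℕ) := hij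
      omega
    · intro i j hadj
      have hne : i ≠ j := (SimpleGraph.top_adj i j).1 hadj
      have h1 : (i : ℕ) < 1 := i.isLt
      have h2 : (j : ℕ) < 1 := j.isLt
      exact absurd (Fin.ext (by omega)) hne
  | succ n ih =>
    intro R
    by_cases hdeg : ∀ v, d ≤ R.degree v
    · left
      exact hgood _ R (by omega) hdeg
    · push_neg at hdeg
      obtain ⟨v, hv⟩ := hdeg
      set B : Finset (Fin (d * (n + 1) + 1)) :=
        Finset.univ.filter (fun u => u ≠ v ∧ ¬ R.Adj v u) with hB
      have hBcard : d * n + 1 ≤ B.card := by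
        have hpart := Finset.card_filter_add_card_filter_not
          (s := (Finset.univ : Finset (Fin (d * (n + 1) + 1))))
          (fun u => u ≠ v ∧ ¬ R.Adj v u)
        have hC : (Finset.univ.filter (fun u : Fin (d * (n + 1) + 1) =>
            ¬ (u ≠ v ∧ ¬ R.Adj v u))).card ≤ 1 + R.degree v := by
          have hsub : (Finset.univ.filter (fun u : Fin (d * (n + 1) + 1) =>
              ¬ (u ≠ v ∧ ¬ R.Adj v u))) ⊆ insert v (R.neighborFinset v) := by
            intro u hu
            simp only [Finset.mem_filter, Finset.mem_univ, true_and] at hu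
            push_neg at hu
            rcases Classical.em (u = v) with h | h
            · exact Finset.mem_insert.2 (Or.inl h)
            · exact Finset.mem_insert.2 (Or.inr ((SimpleGraph.mem_neighborFinset _ _ _).2 (hu h)))
          calc _ ≤ (insert v (R.neighborFinset v)).card := Finset.card_le_card hsub
            _ ≤ (R.neighborFinset v).card + 1 := Finset.card_insert_le _ _
            _ = 1 + R.degree v := by rw [SimpleGraph.degree]; omega
        have hcu : (Finset.univ : Finset (Fin (d * (n + 1) + 1))).card = d * (n + 1) + 1 := by
          simp
        have hexp : d * (n + 1) = d * n + d := by ring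
        rw [← hB] at hpart
        omega
      obtain ⟨B', hB'sub, hB'card⟩ := Finset.exists_subset_card_eq hBcard
      set φ0 := B'.orderEmbOfFin hB'card with hφ0
      set R' := SimpleGraph.comap (fun i => φ0 i) R with hR'
      have hmemB : ∀ i, φ0 i ∈ B := fun i => hB'sub (Finset.orderEmbOfFin_mem B' hB'card i)
      rcases ih R' with h | h
      · left
        obtain ⟨ψ, hmono, hadj⟩ := h
        refine ⟨fun i => φ0 (ψ i), ?_, ?_⟩
        · intro i j hij
          exact φ0.strictMono (hmono hij)
        · intro i j hij
          exact (SimpleGraph.comap_adj).1 (hadj i j hij)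
      · right
        obtain ⟨ψ, hmono, hadj⟩ := h
        set S : Finset (Fin (d * (n + 1) + 1)) :=
          insert v (Finset.univ.image (fun i => φ0 (ψ i))) with hS
        have hvnot : v ∉ Finset.univ.image (fun i : Fin (n + 1) => φ0 (ψ i)) := by
          intro hmem
          obtain ⟨i, _, hi⟩ := Finset.mem_image.1 hmem
          have := hmemB (ψ i)
          rw [hi] at this
          simp only [hB, Finset.mem_filter] at this
          exact this.2.1 rfl
        have hinj : Function.Injective (fun i : Fin (n + 1) => φ0 (ψ i)) :=
          fun i j hij => hmono.injective (φ0.injective hij)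
        have hScard : S.card = n + 1 + 1 := by
          rw [hS, Finset.card_insert_of_notMem hvnot, Finset.card_image_of_injective _ hinj]
          simp
        have hblue : ∀ a ∈ S, ∀ b ∈ S, a ≠ b → ¬ R.Adj a b := by
          have himB : ∀ i : Fin (n + 1), ¬ R.Adj v (φ0 (ψ i)) := by
            intro i
            have := hmemB (ψ i)
            simp only [hB, Finset.mem_filter] at this
            exact this.2.2
          have himim : ∀ i j : Fin (n + 1), φ0 (ψ i) ≠ φ0 (ψ j) → ¬ R.Adj (φ0 (ψ i)) (φ0 (ψ j)) := by
            intro i j hne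
            have hij : i ≠ j := fun h => hne (by rw [h])
            have := hadj i j ((SimpleGraph.top_adj i j).2 hij)
            rw [SimpleGraph.compl_adj] at this
            exact this.2
          intro a ha b hb hab
          rw [hS, Finset.mem_insert] at ha hb
          rcases ha with ha | ha <;> rcases hb with hb | hb
          · exact absurd (ha.trans hb.symm) hab
          · obtain ⟨j, _, hj⟩ := Finset.mem_image.1 hb
            rw [ha, ← hj]
            exact himB j
          · obtain ⟨i, _, hi⟩ := Finset.mem_image.1 ha
            rw [hb, ← hi]
            intro hadj'
            exact (himB i) hadj'.symm
          · obtain ⟨i, _, hi⟩ := Finset.mem_image.1 ha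
            obtain ⟨j, _, hj⟩ := Finset.mem_image.1 hb
            rw [← hi, ← hj]
            exact himim i j (by rw [hi, hj]; exact hab)
        exact blue_clique_of_finset R S hScard hblue

end Stmt6Aux

/-- For all positive integers `m` and `n`,
`r_<(NM_m, K_{n+1}) ≤ (4m - 3) n + 1`. -/
theorem stmt_6 (m n : ℕ) (hm : 1 ≤ m) (hn : 1 ≤ n) :
    orderedRamsey (nestedMatching m) (⊤ : SimpleGraph (Fin (n + 1))) ≤
      (4 * m - 3) * n + 1 := by
  apply Nat.sInf_le
  intro R
  exact Stmt6Aux.chvatal (4 * m - 3) (by omega) (nestedMatching m)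
    (fun N R hN hdeg => Stmt6Aux.nm_of_min_degree hm hN R hdeg) n R
end

section
/- For all positive integers m and n, the ordered Ramsey number of the nested matching NM_m versus the complete ordered graph on n+1 vertices satisfies the lower bound r_<(NM_m, K_{n+1}) ≥ (2m − 1)n + 1; that is, there is a red-blue coloring of the edges of the complete ordered graph on (2m−1)n vertices (n consecutive red cliques of size 2m−1 with all edges between different cliques colored blue) with no red copy of NM_m and no blue copy of K_{n+1} as ordered subgraphs. -/
lemma OS.trans {a b c : ℕ} {G : SimpleGraph (Fin a)} {H : SimpleGraph (Fin b)}
    {K : SimpleGraph (Fin c)} (h1 : OrderedSubgraph G H) (h2 : OrderedSubgraph H K) :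
    OrderedSubgraph G K := by
  obtain ⟨φ, hφ, hφp⟩ := h1
  obtain ⟨ψ, hψ, hψp⟩ := h2
  exact ⟨ψ ∘ φ, hψ.comp hφ, fun i j h => hψp _ _ (hφp _ _ h)⟩

lemma OS.of_comap {a k N : ℕ} {G : SimpleGraph (Fin a)} {R : SimpleGraph (Fin N)}
    {ψ : Fin k → Fin N} (hψ : StrictMono ψ) (h : OrderedSubgraph G (R.comap ψ)) :
    OrderedSubgraph G R := by
  obtain ⟨φ, hφ, hφp⟩ := h
  exact ⟨ψ ∘ φ, hψ.comp hφ, fun i j hij => hφp _ _ hij⟩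

lemma OS.of_comap_compl {a k N : ℕ} {G : SimpleGraph (Fin a)} {R : SimpleGraph (Fin N)}
    {ψ : Fin k → Fin N} (hψ : StrictMono ψ) (h : OrderedSubgraph G (R.comap ψ)ᶜ) :
    OrderedSubgraph G Rᶜ := by
  obtain ⟨φ, hφ, hφp⟩ := h
  refine ⟨ψ ∘ φ, hψ.comp hφ, fun i j hij => ?_⟩
  have := hφp i j hij
  simp only [SimpleGraph.compl_adj, SimpleGraph.comap_adj] at this ⊢
  exact ⟨fun hc => this.1 (hψ.injective hc), this.2⟩

lemma strictMono_cons {k N : ℕ} (a : Fin (N + 1)) (f : Fin k → Fin (N + 1))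
    (hf : StrictMono f) (ha : ∀ i, a < f i) :
    StrictMono (Fin.cons a f : Fin (k + 1) → Fin (N + 1)) := by
  intro i j hij
  rcases Fin.eq_zero_or_eq_succ i with rfl | ⟨i', rfl⟩ <;>
    rcases Fin.eq_zero_or_eq_succ j with rfl | ⟨j', rfl⟩
  · exact absurd hij (lt_irrefl _)
  · simpa using ha j'
  · exact absurd hij (Fin.not_lt_zero _)
  · simpa using hf (by simpa [Fin.succ_lt_succ_iff] using hij)

def RamP (s t N : ℕ) : Prop :=
  ∀ R : SimpleGraph (Fin N),
    OrderedSubgraph (⊤ : SimpleGraph (Fin s)) R ∨ OrderedSubgraph (⊤ : SimpleGraph (Fin t)) Rᶜ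

lemma os_zero {N : ℕ} (R : SimpleGraph (Fin N)) :
    OrderedSubgraph (⊤ : SimpleGraph (Fin 0)) R :=
  ⟨Fin.elim0, fun i => i.elim0, fun i => i.elim0⟩

lemma ram_step {s t N₁ N₂ : ℕ} (h1 : RamP s (t + 1) N₁) (h2 : RamP (s + 1) t N₂) :
    RamP (s + 1) (t + 1) (N₁ + N₂ + 1) := by
  intro R
  classical
  set U : Finset (Fin (N₁ + N₂ + 1)) := Finset.univ.erase 0 with hU
  have hUcard : U.card = N₁ + N₂ := by
    rw [hU, Finset.card_erase_of_mem (Finset.mem_univ _)]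
    simp
  have hsplit := Finset.card_filter_add_card_filter_not
    (s := U) (p := fun x => R.Adj 0 x)
  set A := U.filter (fun x => R.Adj 0 x) with hA
  set B := U.filter (fun x => ¬ R.Adj 0 x) with hB
  have hAB : A.card + B.card = N₁ + N₂ := by rw [hA, hB]; rw [hUcard] at hsplit; exact hsplit
  have hmemA : ∀ x ∈ A, R.Adj 0 x := fun x hx => (Finset.mem_filter.1 hx).2
  have hmemB : ∀ x ∈ B, x ≠ 0 ∧ ¬ R.Adj 0 x := fun x hx =>
    ⟨Finset.ne_of_mem_erase (Finset.mem_filter.1 hx).1, (Finset.mem_filter.1 hx).2⟩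
  rcases (by omega : N₁ ≤ A.card ∨ N₂ ≤ B.card) with hc | hc
  · obtain ⟨A', hsub, hcard⟩ := Finset.exists_subset_card_eq hc
    set ψ : Fin N₁ ↪o Fin (N₁ + N₂ + 1) := A'.orderEmbOfFin hcard with hψ
    have hψadj : ∀ i, R.Adj 0 (ψ i) := fun i => hmemA _ (hsub (A'.orderEmbOfFin_mem hcard i))
    rcases h1 (R.comap ψ) with ⟨φ, hφm, hφp⟩ | hblue
    · left
      refine ⟨Fin.cons 0 (fun i => ψ (φ i)), ?_, ?_⟩
      · exact strictMono_cons _ _ (ψ.strictMono.comp hφm)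
          (fun i => Fin.pos_of_ne_zero (hψadj (φ i)).ne')
      · intro i j hij
        have hijne : i ≠ j := hij.ne
        rcases Fin.eq_zero_or_eq_succ i with rfl | ⟨i', rfl⟩ <;>
          rcases Fin.eq_zero_or_eq_succ j with rfl | ⟨j', rfl⟩
        · exact absurd rfl hijne
        · simpa using hψadj (φ j')
        · simpa using (hψadj (φ i')).symm
        · have : (⊤ : SimpleGraph (Fin s)).Adj i' j' := by
            simp only [SimpleGraph.top_adj]
            intro h; exact hijne (by rw [h])
          have := hφp _ _ this
          simpa using this
    · exact Or.inr (OS.of_comap_compl ψ.strictMono hblue)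
  · obtain ⟨B', hsub, hcard⟩ := Finset.exists_subset_card_eq hc
    set ψ : Fin N₂ ↪o Fin (N₁ + N₂ + 1) := B'.orderEmbOfFin hcard with hψ
    have hψadj : ∀ i, ψ i ≠ 0 ∧ ¬ R.Adj 0 (ψ i) := fun i =>
      hmemB _ (hsub (B'.orderEmbOfFin_mem hcard i))
    rcases h2 (R.comap ψ) with hred | ⟨φ, hφm, hφp⟩
    · exact Or.inl (OS.of_comap ψ.strictMono hred)
    · right
      refine ⟨Fin.cons 0 (fun i => ψ (φ i)), ?_, ?_⟩
      · exact strictMono_cons _ _ (ψ.strictMono.comp hφm)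
          (fun i => Fin.pos_of_ne_zero (hψadj (φ i)).1)
      · intro i j hij
        have hijne : i ≠ j := hij.ne
        rcases Fin.eq_zero_or_eq_succ i with rfl | ⟨i', rfl⟩ <;>
          rcases Fin.eq_zero_or_eq_succ j with rfl | ⟨j', rfl⟩
        · exact absurd rfl hijne
        · simp only [Fin.cons_zero, Fin.cons_succ, SimpleGraph.compl_adj]
          exact ⟨(hψadj (φ j')).1.symm, (hψadj (φ j')).2⟩
        · simp only [Fin.cons_zero, Fin.cons_succ, SimpleGraph.compl_adj]
          refine ⟨(hψadj (φ i')).1, fun h => (hψadj (φ i')).2 h.symm⟩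
        · have : (⊤ : SimpleGraph (Fin t)).Adj i' j' := by
            simp only [SimpleGraph.top_adj]
            intro h; exact hijne (by rw [h])
          have h2 := hφp _ _ this
          simp only [SimpleGraph.compl_adj, SimpleGraph.comap_adj] at h2
          simp only [Fin.cons_succ, SimpleGraph.compl_adj]
          exact ⟨fun hc => h2.1 (ψ.injective hc), h2.2⟩

lemma ramsey_exists : ∀ s t : ℕ, ∃ N, RamP s t N := by
  intro s
  induction s with
  | zero => exact fun t => ⟨0, fun R => Or.inl (os_zero R)⟩
  | succ s ih =>
    intro t
    induction t with
    | zero => exact ⟨0, fun R => Or.inr (os_zero Rᶜ)⟩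
    | succ t iht =>
      obtain ⟨N₁, h1⟩ := ih (t + 1)
      obtain ⟨N₂, h2⟩ := iht
      exact ⟨N₁ + N₂ + 1, ram_step h1 h2⟩


lemma strictMono_gap {a b : ℕ} {f : Fin a → Fin b} (hf : StrictMono f) :
    ∀ d : ℕ, ∀ i j : Fin a, (j : ℕ) = (i : ℕ) + d → (f i : ℕ) + d ≤ (f j : ℕ) := by
  intro d
  induction d with
  | zero => intro i j h; have : i = j := Fin.ext (by omega); subst this; omega
  | succ d ih =>
    intro i j h
    have hj' : (i : ℕ) + d < a := by omega
    set j' : Fin a := ⟨(i : ℕ) + d, hj'⟩ with hj'def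
    have h1 : (f i : ℕ) + d ≤ (f j' : ℕ) := ih i j' rfl
    have h2 : f j' < f j := hf (by simp [Fin.lt_def, hj'def]; omega)
    have := Fin.lt_def.1 h2
    omega

lemma nm_le_top (m : ℕ) :
    OrderedSubgraph (nestedMatching m) (⊤ : SimpleGraph (Fin (2 * m))) :=
  ⟨id, strictMono_id, fun i j h => by simpa using h.ne⟩

lemma no_red (m n : ℕ) (hm : 1 ≤ m) :
    ¬ OrderedSubgraph (nestedMatching m)
        (SimpleGraph.fromRel
          (fun i j : Fin ((2 * m - 1) * n) => (i : ℕ) / (2 * m - 1) = (j : ℕ) / (2 * m - 1))) := by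
  rintro ⟨φ, hφm, hφp⟩
  have h0 : (0 : ℕ) < 2 * m := by omega
  have h1 : 2 * m - 1 < 2 * m := by omega
  set i0 : Fin (2 * m) := ⟨0, h0⟩
  set i1 : Fin (2 * m) := ⟨2 * m - 1, h1⟩
  have hadj : (nestedMatching m).Adj i0 i1 := by
    rw [nestedMatching, SimpleGraph.fromRel_adj]
    constructor
    · intro h
      have := congrArg Fin.val h
      simp [i0, i1] at this
      omega
    · left; simp [i0, i1]
  have h2 := hφp _ _ hadj
  rw [SimpleGraph.fromRel_adj] at h2
  obtain ⟨hne, hsame⟩ := h2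
  have hsame' : (φ i0 : ℕ) / (2 * m - 1) = (φ i1 : ℕ) / (2 * m - 1) := by
    rcases hsame with h | h
    · exact h
    · exact h.symm
  have hgap : (φ i0 : ℕ) + (2 * m - 1) ≤ (φ i1 : ℕ) :=
    strictMono_gap hφm (2 * m - 1) i0 i1 (by simp [i0, i1])
  have hMpos : 0 < 2 * m - 1 := by omega
  have hle : ((φ i0 : ℕ) + (2 * m - 1)) / (2 * m - 1) ≤ (φ i1 : ℕ) / (2 * m - 1) :=
    Nat.div_le_div_right hgap
  rw [Nat.add_div_right _ hMpos] at hle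
  omega

lemma no_blue (m n : ℕ) (hm : 1 ≤ m) :
    ¬ OrderedSubgraph (⊤ : SimpleGraph (Fin (n + 1)))
        (SimpleGraph.fromRel
          (fun i j : Fin ((2 * m - 1) * n) =>
            (i : ℕ) / (2 * m - 1) = (j : ℕ) / (2 * m - 1)))ᶜ := by
  rintro ⟨φ, hφm, hφp⟩
  have hMpos : 0 < 2 * m - 1 := by omega
  have hbound : ∀ k : Fin (n + 1), (φ k : ℕ) / (2 * m - 1) < n := by
    intro k
    rw [Nat.div_lt_iff_lt_mul hMpos]
    have := (φ k).isLt
    calc (φ k : ℕ) < (2 * m - 1) * n := this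
      _ = n * (2 * m - 1) := Nat.mul_comm _ _
  set f : Fin (n + 1) → Fin n := fun k => ⟨(φ k : ℕ) / (2 * m - 1), hbound k⟩ with hf
  have hinj : Function.Injective f := by
    intro k l hkl
    by_contra hne
    have hadj : (⊤ : SimpleGraph (Fin (n + 1))).Adj k l := by simpa using hne
    have h2 := hφp _ _ hadj
    simp only [SimpleGraph.compl_adj, SimpleGraph.fromRel_adj] at h2
    obtain ⟨hne2, hnot⟩ := h2
    apply hnot
    refine ⟨hne2, Or.inl ?_⟩
    exact congrArg Fin.val hkl
  have := Fintype.card_le_of_injective f hinj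
  simp at this


/-- For all positive integers `m` and `n`,
`r_<(NM_m, K_{n+1}) ≥ (2m - 1) n + 1`; that is, there is a red-blue coloring of the edges
of `K_{(2m-1)n}` (given by its red graph: `n` consecutive red cliques of size `2m - 1`,
all edges between different cliques blue) with no red copy of `NM_m` and no blue copy of
`K_{n+1}`. -/
theorem stmt_7 (m n : ℕ) (hm : 1 ≤ m) (hn : 1 ≤ n) :
    (2 * m - 1) * n + 1 ≤ orderedRamsey (nestedMatching m) (⊤ : SimpleGraph (Fin (n + 1))) ∧
    ¬ OrderedSubgraph (nestedMatching m)
        (SimpleGraph.fromRel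
          (fun i j : Fin ((2 * m - 1) * n) => (i : ℕ) / (2 * m - 1) = (j : ℕ) / (2 * m - 1))) ∧
    ¬ OrderedSubgraph (⊤ : SimpleGraph (Fin (n + 1)))
        (SimpleGraph.fromRel
          (fun i j : Fin ((2 * m - 1) * n) =>
            (i : ℕ) / (2 * m - 1) = (j : ℕ) / (2 * m - 1)))ᶜ := by
  have hred := no_red m n hm
  have hblue := no_blue m n hm
  refine ⟨?_, hred, hblue⟩
  obtain ⟨N, hN⟩ := ramsey_exists (2 * m) (n + 1)
  have hNmem : N ∈ {N : ℕ | ∀ R : SimpleGraph (Fin N),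
      OrderedSubgraph (nestedMatching m) R ∨
      OrderedSubgraph (⊤ : SimpleGraph (Fin (n + 1))) Rᶜ} := by
    intro R
    rcases hN R with h | h
    · exact Or.inl (OS.trans (nm_le_top m) h)
    · exact Or.inr h
  rw [orderedRamsey]
  refine le_csInf ⟨N, hNmem⟩ ?_
  intro b hb
  by_contra hlt
  push_neg at hlt
  have hble : b ≤ (2 * m - 1) * n := by omega
  set Bad : SimpleGraph (Fin ((2 * m - 1) * n)) :=
    SimpleGraph.fromRel
      (fun i j : Fin ((2 * m - 1) * n) => (i : ℕ) / (2 * m - 1) = (j : ℕ) / (2 * m - 1))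
    with hBad
  have hcast : StrictMono (Fin.castLE hble) := Fin.strictMono_castLE hble
  rcases hb (Bad.comap (Fin.castLE hble)) with h | h
  · exact hred (OS.of_comap hcast h)
  · exact hblue (OS.of_comap_compl hcast h)
end

section
/- Every good connected ordered graph is an ordered tree; that is, if a connected ordered graph G is n-good for every positive integer n, then the underlying graph of G contains no cycle. -/
open Finset
namespace Stmt8


set_option linter.unusedSectionVars false

variable {ι : Type*} [Fintype ι] [DecidableEq ι]

noncomputable def wt (p : ℝ) (E : Finset ι) : ℝ :=
  p ^ E.card * (1 - p) ^ (Fintype.card ι - E.card)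

lemma wt_nonneg {p : ℝ} (h0 : 0 ≤ p) (h1 : p ≤ 1) (E : Finset ι) : 0 ≤ wt p E := by
  have : (0:ℝ) ≤ 1 - p := by linarith
  exact mul_nonneg (pow_nonneg h0 _) (pow_nonneg this _)

lemma sum_wt_powerset (p : ℝ) (J : Finset ι) :
    ∑ F ∈ J.powerset, p ^ F.card * (1 - p) ^ (J.card - F.card) = 1 := by
  have h := Finset.prod_add (fun _ : ι => p) (fun _ : ι => 1 - p) J
  have h2 : ∑ t ∈ J.powerset, (∏ _i ∈ t, p) * ∏ _i ∈ J \ t, (1 - p) = 1 := by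
    rw [← h]; simp
  calc ∑ F ∈ J.powerset, p ^ F.card * (1 - p) ^ (J.card - F.card)
      = ∑ t ∈ J.powerset, (∏ _i ∈ t, p) * ∏ _i ∈ J \ t, (1 - p) := by
        refine Finset.sum_congr rfl ?_
        intro t ht
        rw [Finset.prod_const, Finset.prod_const, Finset.card_sdiff_of_subset (Finset.mem_powerset.1 ht)]
    _ = 1 := h2

lemma total_mass (p : ℝ) :
    ∑ F ∈ (Finset.univ : Finset ι).powerset, wt p F = 1 := by
  have := sum_wt_powerset p (Finset.univ : Finset ι)
  simpa [wt, Finset.card_univ] using this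

lemma meas_superset (p : ℝ) (A : Finset ι) [DecidablePred (fun F : Finset ι => A ⊆ F)] :
    ∑ F ∈ (Finset.univ : Finset ι).powerset.filter (fun F => A ⊆ F), wt p F
      = p ^ A.card := by
  have key : ∑ F ∈ (Finset.univ : Finset ι).powerset.filter (fun F => A ⊆ F), wt p F
      = ∑ F' ∈ ((Finset.univ : Finset ι) \ A).powerset,
          p ^ A.card * (p ^ F'.card * (1 - p) ^ ((Finset.univ \ A : Finset ι).card - F'.card)) := by
    refine Finset.sum_nbij' (fun F => F \ A) (fun F' => F' ∪ A) ?_ ?_ ?_ ?_ ?_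
    · intro F hF
      simp only [Finset.mem_filter, Finset.mem_powerset] at hF
      rw [Finset.mem_powerset]
      exact Finset.sdiff_subset_sdiff hF.1 (le_refl _)
    · intro F' hF'
      simp only [Finset.mem_filter, Finset.mem_powerset]
      exact ⟨Finset.subset_univ _, Finset.subset_union_right⟩
    · intro F hF
      simp only [Finset.mem_filter, Finset.mem_powerset] at hF
      exact Finset.sdiff_union_of_subset hF.2
    · intro F' hF'
      rw [Finset.mem_powerset] at hF'
      exact Finset.union_sdiff_cancel_right (Finset.subset_sdiff.1 hF').2
    · intro F hF
      simp only [Finset.mem_filter, Finset.mem_powerset] at hF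
      have hsub : A ⊆ F := hF.2
      have h1 : A.card ≤ F.card := Finset.card_le_card hsub
      have h2 : F.card ≤ Fintype.card ι := Finset.card_le_univ F
      have h3 : A.card ≤ Fintype.card ι := Finset.card_le_univ A
      have hc1 : (F \ A).card = F.card - A.card := Finset.card_sdiff_of_subset hsub
      have hc2 : ((Finset.univ : Finset ι) \ A).card = Fintype.card ι - A.card := by
        rw [Finset.card_sdiff_of_subset (Finset.subset_univ A), Finset.card_univ]
      have e1 : F.card = A.card + (F.card - A.card) := by omega
      have e2 : Fintype.card ι - A.card - (F.card - A.card) = Fintype.card ι - F.card := by omega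
      rw [wt, hc1, hc2, e2, e1, pow_add]
      simp [mul_assoc]
  rw [key, ← Finset.mul_sum, sum_wt_powerset, mul_one]

lemma meas_avoid (p : ℝ) (A : Finset ι) [DecidablePred (fun F : Finset ι => ∀ a ∈ A, a ∉ F)] :
    ∑ F ∈ (Finset.univ : Finset ι).powerset.filter (fun F => ∀ a ∈ A, a ∉ F), wt p F
      = (1 - p) ^ A.card := by
  have hset : (Finset.univ : Finset ι).powerset.filter (fun F => ∀ a ∈ A, a ∉ F)
      = ((Finset.univ : Finset ι) \ A).powerset := by
    ext F
    simp only [Finset.mem_filter, Finset.mem_powerset, Finset.subset_sdiff]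
    constructor
    · rintro ⟨h1, h2⟩
      exact ⟨h1, Finset.disjoint_right.2 (fun a ha => h2 a ha)⟩
    · rintro ⟨h1, h2⟩
      exact ⟨h1, fun a ha haF => (Finset.disjoint_right.1 h2 ha) haF⟩
  rw [hset]
  have key : ∀ F' ∈ ((Finset.univ : Finset ι) \ A).powerset,
      wt p F' = (1 - p) ^ A.card *
        (p ^ F'.card * (1 - p) ^ ((Finset.univ \ A : Finset ι).card - F'.card)) := by
    intro F' hF'
    rw [Finset.mem_powerset] at hF'
    have h1 : F'.card ≤ ((Finset.univ : Finset ι) \ A).card := Finset.card_le_card hF'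
    have hc2 : ((Finset.univ : Finset ι) \ A).card = Fintype.card ι - A.card := by
      rw [Finset.card_sdiff_of_subset (Finset.subset_univ A), Finset.card_univ]
    have h3 : A.card ≤ Fintype.card ι := Finset.card_le_univ A
    rw [wt]
    rw [hc2] at h1 ⊢
    have e2 : Fintype.card ι - F'.card = A.card + (Fintype.card ι - A.card - F'.card) := by omega
    rw [e2, pow_add]
    ring
  rw [Finset.sum_congr rfl key, ← Finset.mul_sum, sum_wt_powerset, mul_one]

/-- monotonicity of measure -/
lemma meas_mono {p : ℝ} (h0 : 0 ≤ p) (h1 : p ≤ 1) (P Q : Finset ι → Prop)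
    [DecidablePred P] [DecidablePred Q] (h : ∀ F, P F → Q F) :
    ∑ F ∈ (Finset.univ : Finset ι).powerset.filter P, wt p F
      ≤ ∑ F ∈ (Finset.univ : Finset ι).powerset.filter Q, wt p F := by
  refine Finset.sum_le_sum_of_subset_of_nonneg ?_ ?_
  · intro F hF
    simp only [Finset.mem_filter] at hF ⊢
    exact ⟨hF.1, h F hF.2⟩
  · intro F _ _; exact wt_nonneg h0 h1 F

/-- union bound -/
lemma meas_union_bound {p : ℝ} (h0 : 0 ≤ p) (h1 : p ≤ 1) {κ : Type*} (I : Finset κ)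
    (P : Finset ι → Prop) (r : κ → Finset ι → Prop)
    [DecidablePred P] [∀ i, DecidablePred (r i)]
    (h : ∀ F, P F → ∃ i ∈ I, r i F) :
    ∑ F ∈ (Finset.univ : Finset ι).powerset.filter P, wt p F
      ≤ ∑ i ∈ I, ∑ F ∈ (Finset.univ : Finset ι).powerset.filter (r i), wt p F := by
  have step1 : ∑ F ∈ (Finset.univ : Finset ι).powerset.filter P, wt p F
      ≤ ∑ F ∈ (Finset.univ : Finset ι).powerset.filter P, ∑ i ∈ I, (if r i F then wt p F else 0) := by
    refine Finset.sum_le_sum ?_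
    intro F hF
    simp only [Finset.mem_filter] at hF
    obtain ⟨i0, hi0, hri⟩ := h F hF.2
    have heq : wt p F = if r i0 F then wt p F else 0 := by simp [hri]
    refine le_trans (le_of_eq heq) ?_
    refine Finset.single_le_sum (f := fun i => if r i F then wt p F else 0) ?_ hi0
    intro i _
    by_cases hr : r i F <;> simp [hr, wt_nonneg h0 h1]
  have step2 : ∑ F ∈ (Finset.univ : Finset ι).powerset.filter P, ∑ i ∈ I, (if r i F then wt p F else 0)
      ≤ ∑ F ∈ (Finset.univ : Finset ι).powerset, ∑ i ∈ I, (if r i F then wt p F else 0) := by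
    refine Finset.sum_le_sum_of_subset_of_nonneg (Finset.filter_subset _ _) ?_
    intro F _ _
    refine Finset.sum_nonneg ?_
    intro i _
    by_cases hr : r i F <;> simp [hr, wt_nonneg h0 h1]
  calc ∑ F ∈ (Finset.univ : Finset ι).powerset.filter P, wt p F
      ≤ ∑ F ∈ (Finset.univ : Finset ι).powerset, ∑ i ∈ I, (if r i F then wt p F else 0) :=
        le_trans step1 step2
    _ = ∑ i ∈ I, ∑ F ∈ (Finset.univ : Finset ι).powerset, (if r i F then wt p F else 0) :=
        Finset.sum_comm
    _ = ∑ i ∈ I, ∑ F ∈ (Finset.univ : Finset ι).powerset.filter (r i), wt p F := by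
        refine Finset.sum_congr rfl ?_
        intro i _
        rw [Finset.sum_filter]

/-- Markov inequality -/
lemma meas_markov {p : ℝ} (h0 : 0 ≤ p) (h1 : p ≤ 1) (b : Finset ι → ℕ) (c : ℝ) (hc : 0 < c)
    [DecidablePred (fun F : Finset ι => c ≤ (b F : ℝ))] :
    ∑ F ∈ (Finset.univ : Finset ι).powerset.filter (fun F => c ≤ (b F : ℝ)), wt p F
      ≤ (∑ F ∈ (Finset.univ : Finset ι).powerset, wt p F * (b F : ℝ)) / c := by
  rw [le_div_iff₀ hc]
  have step1 : (∑ F ∈ (Finset.univ : Finset ι).powerset.filter (fun F => c ≤ (b F : ℝ)), wt p F) * c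
      = ∑ F ∈ (Finset.univ : Finset ι).powerset.filter (fun F => c ≤ (b F : ℝ)), wt p F * c := by
    rw [Finset.sum_mul]
  rw [step1]
  have step2 : ∑ F ∈ (Finset.univ : Finset ι).powerset.filter (fun F => c ≤ (b F : ℝ)), wt p F * c
      ≤ ∑ F ∈ (Finset.univ : Finset ι).powerset.filter (fun F => c ≤ (b F : ℝ)), wt p F * (b F : ℝ) := by
    refine Finset.sum_le_sum ?_
    intro F hF
    simp only [Finset.mem_filter] at hF
    exact mul_le_mul_of_nonneg_left hF.2 (wt_nonneg h0 h1 F)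
  refine le_trans step2 ?_
  refine Finset.sum_le_sum_of_subset_of_nonneg (Finset.filter_subset _ _) ?_
  intro F _ _
  exact mul_nonneg (wt_nonneg h0 h1 F) (Nat.cast_nonneg _)

/-- complement-existence -/
lemma exists_good {p : ℝ} (h0 : 0 ≤ p) (h1 : p ≤ 1) (P Q : Finset ι → Prop)
    [DecidablePred P] [DecidablePred Q]
    (hP : ∑ F ∈ (Finset.univ : Finset ι).powerset.filter P, wt p F ≤ 1/4)
    (hQ : ∑ F ∈ (Finset.univ : Finset ι).powerset.filter Q, wt p F ≤ 1/4) :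
    ∃ F : Finset ι, ¬ P F ∧ ¬ Q F := by
  by_contra hcon
  push_neg at hcon
  have hcover : ∀ F : Finset ι, wt p F ≤ (if P F then wt p F else 0) + (if Q F then wt p F else 0) := by
    intro F
    by_cases hPF : P F
    · have h2 : (0:ℝ) ≤ if Q F then wt p F else 0 := by
        by_cases hq : Q F <;> simp [hq, wt_nonneg h0 h1]
      simp only [hPF, if_true]
      linarith
    · have hQF : Q F := hcon F hPF
      have h2 : (0:ℝ) ≤ if P F then wt p F else 0 := by
        by_cases hq : P F <;> simp [hq, wt_nonneg h0 h1]
      simp only [hQF, if_true]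
      linarith
  have : (1:ℝ) ≤ 1/4 + 1/4 := by
    calc (1:ℝ) = ∑ F ∈ (Finset.univ : Finset ι).powerset, wt p F := (total_mass p).symm
      _ ≤ ∑ F ∈ (Finset.univ : Finset ι).powerset,
            ((if P F then wt p F else 0) + (if Q F then wt p F else 0)) := by
          exact Finset.sum_le_sum (fun F _ => hcover F)
      _ = (∑ F ∈ (Finset.univ : Finset ι).powerset.filter P, wt p F)
          + ∑ F ∈ (Finset.univ : Finset ι).powerset.filter Q, wt p F := by
          rw [Finset.sum_add_distrib, Finset.sum_filter, Finset.sum_filter]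
      _ ≤ 1/4 + 1/4 := add_le_add hP hQ
  linarith




lemma choose_le_two_pow (q j : ℕ) : q.choose j ≤ 2^q := by
  rcases le_or_gt j q with h | h
  · calc q.choose j ≤ ∑ i ∈ Finset.range (q+1), q.choose i :=
        Finset.single_le_sum (f := fun i => q.choose i) (fun i _ => Nat.zero_le _)
          (Finset.mem_range.2 (by omega))
      _ = 2^q := Nat.sum_range_choose q
  · rw [Nat.choose_eq_zero_of_lt h]; exact Nat.zero_le _

variable {N : ℕ}

/-- the set of (unordered, non-diagonal) pairs inside `T` -/
def sympairs (T : Finset (Fin N)) : Finset (Sym2 (Fin N)) :=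
  (T.offDiag.filter (fun q => q.1 < q.2)).image (fun q : Fin N × Fin N => s(q.1, q.2))

lemma sympairs_mem {T : Finset (Fin N)} {e : Sym2 (Fin N)} (he : e ∈ sympairs T) :
    ∃ a ∈ T, ∃ b ∈ T, a ≠ b ∧ e = s(a, b) := by
  obtain ⟨q, hq, rfl⟩ := Finset.mem_image.1 he
  simp only [Finset.mem_filter, Finset.mem_offDiag] at hq
  exact ⟨q.1, hq.1.1, q.2, hq.1.2.1, hq.1.2.2, rfl⟩

lemma sympairs_card (T : Finset (Fin N)) :
    2 * (sympairs T).card = T.card * T.card - T.card := by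
  classical
  have hinj : Set.InjOn (fun q : Fin N × Fin N => s(q.1, q.2)) ((T.offDiag.filter (fun q => q.1 < q.2)) : Set (Fin N × Fin N)) := by
    intro q hq q' hq' h
    simp only [Finset.coe_filter, Set.mem_setOf_eq] at hq hq'
    rcases Sym2.mk_eq_mk_iff.1 h with h1 | h2
    · exact h1
    · exfalso
      rw [h2] at hq
      simp only [Prod.fst_swap, Prod.snd_swap] at hq
      exact absurd hq'.2 (not_lt.2 (le_of_lt hq.2))
  have hcard1 : (sympairs T).card = (T.offDiag.filter (fun q => q.1 < q.2)).card :=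
    Finset.card_image_of_injOn hinj
  have hflip : (T.offDiag.filter (fun q => q.1 < q.2)).card
      = (T.offDiag.filter (fun q => q.2 < q.1)).card := by
    refine Finset.card_bij' (fun q _ => q.swap) (fun q _ => q.swap) ?_ ?_ ?_ ?_
    · intro q hq
      simp only [Finset.mem_filter, Finset.mem_offDiag] at hq ⊢
      exact ⟨⟨hq.1.2.1, hq.1.1, fun h => hq.1.2.2 h.symm⟩, hq.2⟩
    · intro q hq
      simp only [Finset.mem_filter, Finset.mem_offDiag] at hq ⊢
      exact ⟨⟨hq.1.2.1, hq.1.1, fun h => hq.1.2.2 h.symm⟩, hq.2⟩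
    · intro q _; rfl
    · intro q _; rfl
  have hsplit : (T.offDiag.filter (fun q => q.1 < q.2)) ∪ (T.offDiag.filter (fun q => q.2 < q.1))
      = T.offDiag := by
    ext q
    simp only [Finset.mem_union, Finset.mem_filter, Finset.mem_offDiag]
    constructor
    · rintro (⟨h, _⟩ | ⟨h, _⟩) <;> exact h
    · intro h
      rcases lt_or_gt_of_ne h.2.2 with h' | h'
      · exact Or.inl ⟨h, h'⟩
      · exact Or.inr ⟨h, h'⟩
  have hdisj : Disjoint (T.offDiag.filter (fun q => q.1 < q.2))
      (T.offDiag.filter (fun q => q.2 < q.1)) := by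
    rw [Finset.disjoint_left]
    intro q hq hq'
    simp only [Finset.mem_filter] at hq hq'
    exact absurd hq'.2 (not_lt.2 (le_of_lt hq.2))
  have := Finset.card_union_of_disjoint hdisj
  rw [hsplit] at this
  rw [Finset.offDiag_card] at this
  omega




lemma arith_main (m z L : ℕ) (hm : 1 ≤ m) (hz : z = 4*m+16) (hL : L = 2*m*z) :
    (m-1)*(2*2^(L-z)*(L+2)) + 1 + 4*m*(m*2^(m^2)*2^(z*m)) ≤ 2^L := by
  have h2m : m ≤ 2^m := (Nat.lt_two_pow_self (n := m)).le
  have hzL : z ≤ L := by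
    rw [hL]; nlinarith
  have hL1 : 1 ≤ L := by omega
  -- part 1 : m * k ≤ 2^(L-1)
  have hkey1 : 2*m*(L+2) ≤ 2^(z-1) := by
    have e1 : 2*m*(L+2) = 4*m*(m*z+1) := by rw [hL]; ring
    have e2 : m*z+1 ≤ 21*m^2 := by
      have : m*z = 4*m^2+16*m := by rw [hz]; ring
      nlinarith
    have e3 : 4*m*(m*z+1) ≤ 84*m^3 := by nlinarith
    have e4 : 84*m^3 ≤ 128*(2^m)^3 := by
      have : m^3 ≤ (2^m)^3 := Nat.pow_le_pow_left h2m 3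
      nlinarith
    have e5 : 128*(2^m)^3 = 2^(3*m+7) := by
      rw [pow_add, ← pow_mul]; ring
    have e6 : 3*m+7 ≤ z-1 := by omega
    calc 2*m*(L+2) = 4*m*(m*z+1) := e1
      _ ≤ 84*m^3 := le_trans e3 (le_refl _)
      _ ≤ 128*(2^m)^3 := e4
      _ = 2^(3*m+7) := e5
      _ ≤ 2^(z-1) := Nat.pow_le_pow_right (by norm_num) e6
  have hpart1 : m*(2*2^(L-z)*(L+2)) ≤ 2^(L-1) := by
    have : m*(2*2^(L-z)*(L+2)) = (2*m*(L+2))*2^(L-z) := by ring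
    rw [this]
    calc (2*m*(L+2))*2^(L-z) ≤ 2^(z-1)*2^(L-z) :=
        Nat.mul_le_mul_right _ hkey1
      _ = 2^(L-1) := by rw [← pow_add]; congr 1; omega
  -- part 2
  have hpart2 : 4*m*(m*2^(m^2)*2^(z*m)) ≤ 2^(L-1) := by
    have e1 : 4*m*(m*2^(m^2)*2^(z*m)) = (4*m*m)*2^(m^2+z*m) := by
      rw [pow_add]; ring
    have e2 : 4*m*m ≤ 2^(2*m+2) := by
      have : m*m ≤ 2^m*2^m := Nat.mul_le_mul h2m h2m
      calc 4*m*m = 4*(m*m) := by ring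
        _ ≤ 4*(2^m*2^m) := Nat.mul_le_mul_left _ this
        _ = 2^(2*m+2) := by rw [pow_add, two_mul, pow_add]; ring
    have e3 : m^2+z*m+(2*m+2) ≤ L-1 := by
      have hsq : m^2 = m*m := sq m
      have hzm : z*m = 4*(m*m)+16*m := by rw [hz]; ring
      have hLz : L = 8*(m*m)+32*m := by rw [hL, hz]; ring
      have h1m : 1 ≤ m*m := Nat.one_le_iff_ne_zero.2 (by positivity)
      omega
    calc 4*m*(m*2^(m^2)*2^(z*m)) = (4*m*m)*2^(m^2+z*m) := e1
      _ ≤ 2^(2*m+2)*2^(m^2+z*m) := Nat.mul_le_mul_right _ e2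
      _ = 2^(m^2+z*m+(2*m+2)) := by rw [← pow_add]; ring_nf
      _ ≤ 2^(L-1) := Nat.pow_le_pow_right (by norm_num) e3
  have hk1 : 1 ≤ 2*2^(L-z)*(L+2) := by
    have : 1 ≤ 2^(L-z) := Nat.one_le_two_pow
    nlinarith
  have hstep : (m-1)*(2*2^(L-z)*(L+2)) + 1 ≤ m*(2*2^(L-z)*(L+2)) := by
    have : m*(2*2^(L-z)*(L+2)) = (m-1)*(2*2^(L-z)*(L+2)) + 1*(2*2^(L-z)*(L+2)) := by
      rw [← Nat.add_mul]
      congr 1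
      omega
    omega
  have hfin : 2^(L-1) + 2^(L-1) = 2^L := by
    rw [← two_mul, ← pow_succ']
    congr 1
    omega
  omega




lemma indep_bound (L s k K n : ℕ) (p : ℝ) (hsp : (s:ℝ) * p = 1)
    (h0 : 0 ≤ p) (h1 : p ≤ 1) (hK : K = s*((L+2)*(k+1))) (hn : n = 2^L) :
    (n.choose (k+1) : ℝ) * (1-p)^K ≤ 1/4 := by
  have hb : (2:ℝ) ≤ (1+p)^s := by
    have h := one_add_mul_le_pow (a := p) (by linarith) s
    rw [hsp] at h
    linarith
  have h2K : (2:ℝ)^((L+2)*(k+1)) ≤ (1+p)^K := by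
    rw [hK]
    conv_rhs => rw [pow_mul]
    exact pow_le_pow_left₀ (by norm_num) hb _
  have hprod : (1-p)^K * (1+p)^K ≤ 1 := by
    rw [← mul_pow]
    have he : (1-p)*(1+p) = 1 - p^2 := by ring
    rw [he]
    apply pow_le_one₀ (by nlinarith) (by nlinarith)
  have hppos : (0:ℝ) < (1+p)^K := pow_pos (by linarith) K
  have hinv : (1-p)^K ≤ ((2:ℝ)^((L+2)*(k+1)))⁻¹ := by
    have hq1 : (1-p)^K ≤ ((1+p)^K)⁻¹ := by
      have := (le_div_iff₀ hppos).2 hprod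
      rwa [one_div] at this
    have hq2 : ((1+p)^K)⁻¹ ≤ ((2:ℝ)^((L+2)*(k+1)))⁻¹ := by
      exact inv_anti₀ (by positivity) h2K
    linarith
  have hch : ((n.choose (k+1)):ℝ) ≤ (2:ℝ)^(L*(k+1)) := by
    have h := Nat.choose_le_pow n (k+1)
    calc ((n.choose (k+1)):ℝ) ≤ ((n^(k+1) : ℕ):ℝ) := Nat.cast_le.2 h
      _ = ((n:ℝ))^(k+1) := by push_cast; ring
      _ = (2:ℝ)^(L*(k+1)) := by rw [hn, pow_mul]; push_cast; ring
  calc (n.choose (k+1):ℝ) * (1-p)^K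
      ≤ (2:ℝ)^(L*(k+1)) * ((2:ℝ)^((L+2)*(k+1)))⁻¹ := by
        refine mul_le_mul hch hinv (pow_nonneg (by linarith) K) (by positivity)
    _ = ((2:ℝ)^(2*(k+1)))⁻¹ := by
        have he : (L+2)*(k+1) = L*(k+1) + 2*(k+1) := by ring
        rw [he, pow_add]
        field_simp
    _ ≤ 1/4 := by
        have h4 : (4:ℝ) ≤ 2^(2*(k+1)) := by
          calc (4:ℝ) = 2^2 := by norm_num
            _ ≤ 2^(2*(k+1)) := pow_le_pow_right₀ (by norm_num) (by omega)
        rw [one_div]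
        exact inv_anti₀ (by norm_num) h4


open scoped Classical in
/-- `S` spans at least `|S|` edges of `E` (and has size in `[3, m]`) -/
def badPred (m : ℕ) {N : ℕ} (S : Finset (Fin N)) (E : Finset (Sym2 (Fin N))) : Prop :=
  3 ≤ S.card ∧ S.card ≤ m ∧ S.card ≤ (E.filter (fun e => ∀ x ∈ e, x ∈ S)).card

open scoped Classical in
noncomputable def badCount (m : ℕ) {N : ℕ} (E : Finset (Sym2 (Fin N))) : ℕ :=
  ((Finset.univ : Finset (Fin N)).powerset.filter (fun S => badPred m S E)).card

lemma main_exists (m : ℕ) (hm : 1 ≤ m) :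
    ∃ (N k : ℕ) (E : Finset (Sym2 (Fin N))) (V : Finset (Fin N)),
      (m-1)*k + 1 ≤ V.card ∧
      (∀ T : Finset (Fin N), T.card = k+1 → ∃ a ∈ T, ∃ b ∈ T, a ≠ b ∧ s(a, b) ∈ E) ∧
      (∀ S : Finset (Fin N), S ⊆ V → 3 ≤ S.card → S.card ≤ m →
        (E.filter (fun e => ∀ x ∈ e, x ∈ S)).card < S.card) := by
  classical
  obtain ⟨z, hz⟩ : ∃ z, z = 4*m+16 := ⟨_, rfl⟩
  obtain ⟨L, hL⟩ : ∃ L, L = 2*m*z := ⟨_, rfl⟩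
  obtain ⟨N, hN⟩ : ∃ N, N = 2^L := ⟨_, rfl⟩
  obtain ⟨s, hs⟩ : ∃ s, s = 2^(L-z) := ⟨_, rfl⟩
  obtain ⟨k, hk⟩ : ∃ k, k = 2*s*(L+2) := ⟨_, rfl⟩
  obtain ⟨K, hK⟩ : ∃ K, K = s*((L+2)*(k+1)) := ⟨_, rfl⟩
  obtain ⟨W, hW⟩ : ∃ W, W = m*2^(m^2)*2^(z*m) := ⟨_, rfl⟩
  obtain ⟨p, hp⟩ : ∃ p : ℝ, p = ((s:ℕ):ℝ)⁻¹ := ⟨_, rfl⟩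
  have hzL : z ≤ L := by rw [hL]; nlinarith
  have hs1 : 1 ≤ s := hs ▸ Nat.one_le_two_pow
  have hsR : (0:ℝ) < (s:ℝ) := by exact_mod_cast hs1
  have hsp : (s:ℝ) * p = 1 := by rw [hp]; exact mul_inv_cancel₀ (ne_of_gt hsR)
  have h0 : 0 ≤ p := by rw [hp]; positivity
  have h1 : p ≤ 1 := by
    rw [hp]
    have h1s : (1:ℝ) ≤ (s:ℝ) := by exact_mod_cast hs1
    exact inv_le_one_of_one_le₀ h1s
  have hNs : N = s * 2^z := by
    rw [hN, hs, ← pow_add]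
    congr 1
    omega
  have hNp : (N:ℝ) * p = (2:ℝ)^z := by
    rw [hNs]
    push_cast
    calc (s:ℝ) * 2^z * p = ((s:ℝ) * p) * 2^z := by ring
      _ = (2:ℝ)^z := by rw [hsp, one_mul]
  -- measure of the "independent (k+1)-set exists" event
  have hmeasP1 : ∑ E ∈ (Finset.univ : Finset (Sym2 (Fin N))).powerset.filter
        (fun E => ∃ T : Finset (Fin N), T.card = k+1 ∧
          ∀ a ∈ T, ∀ b ∈ T, a ≠ b → s(a, b) ∉ E), wt p E ≤ 1/4 := by
    have hub := meas_union_bound (ι := Sym2 (Fin N)) h0 h1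
      (Finset.powersetCard (k+1) (Finset.univ : Finset (Fin N)))
      (fun E => ∃ T : Finset (Fin N), T.card = k+1 ∧
          ∀ a ∈ T, ∀ b ∈ T, a ≠ b → s(a, b) ∉ E)
      (fun T E => ∀ a ∈ sympairs T, a ∉ E)
      (by
        intro E hE
        obtain ⟨T, hTc, hTind⟩ := hE
        refine ⟨T, Finset.mem_powersetCard_univ.2 hTc, ?_⟩
        intro e he
        obtain ⟨a, ha, b, hb, hab, rfl⟩ := sympairs_mem he
        exact hTind a ha b hb hab)
    refine le_trans hub ?_
    have hterm : ∀ T ∈ Finset.powersetCard (k+1) (Finset.univ : Finset (Fin N)),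
        (∑ F ∈ (Finset.univ : Finset (Sym2 (Fin N))).powerset.filter
          (fun F => ∀ a ∈ sympairs T, a ∉ F), wt p F) = (1-p)^K := by
      intro T hT
      have hTc : T.card = k+1 := Finset.mem_powersetCard_univ.1 hT
      have hcard : (sympairs T).card = K := by
        have h2 := sympairs_card T
        rw [hTc] at h2
        have h3 : 2*K = (k+1)*(k+1) - (k+1) := by
          have e : 2*K = k*(k+1) := by rw [hK, hk]; ring
          have e2 : (k+1)*(k+1) - (k+1) = k*(k+1) := by
            have : (k+1)*(k+1) = k*(k+1) + (k+1) := by ring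
            omega
          omega
        omega
      rw [meas_avoid, hcard]
    rw [Finset.sum_congr rfl hterm, Finset.sum_const, nsmul_eq_mul,
      Finset.card_powersetCard, Finset.card_univ, Fintype.card_fin]
    exact indep_bound L s k K N p hsp h0 h1 hK hN
  -- per-set measure bound for bad sets
  have hS : ∀ S : Finset (Fin N),
      (∑ E ∈ (Finset.univ : Finset (Sym2 (Fin N))).powerset.filter
        (fun E => badPred m S E), wt p E)
      ≤ (if 3 ≤ S.card ∧ S.card ≤ m then (2:ℝ)^(m^2) * p^S.card else 0) := by
    intro S
    by_cases hc : 3 ≤ S.card ∧ S.card ≤ m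
    · simp only [hc, if_true]
      have himp : ∀ E : Finset (Sym2 (Fin N)), badPred m S E →
          ∃ T ∈ Finset.powersetCard S.card
            ((Finset.univ : Finset (Sym2 (Fin N))).filter (fun e => ∀ x ∈ e, x ∈ S)), T ⊆ E := by
        intro E hbad
        obtain ⟨T, hTsub, hTcard⟩ := Finset.exists_subset_card_eq hbad.2.2
        refine ⟨T, Finset.mem_powersetCard.2 ⟨?_, hTcard⟩, ?_⟩
        · intro e he
          have := hTsub he
          simp only [Finset.mem_filter] at this ⊢
          exact ⟨Finset.mem_univ _, this.2⟩
        · intro e he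
          exact (Finset.mem_filter.1 (hTsub he)).1
      have hub := meas_union_bound (ι := Sym2 (Fin N)) h0 h1
        (Finset.powersetCard S.card
          ((Finset.univ : Finset (Sym2 (Fin N))).filter (fun e => ∀ x ∈ e, x ∈ S)))
        (fun E => badPred m S E) (fun T E => T ⊆ E) himp
      refine le_trans hub ?_
      have hterm : ∀ T ∈ Finset.powersetCard S.card
          ((Finset.univ : Finset (Sym2 (Fin N))).filter (fun e => ∀ x ∈ e, x ∈ S)),
          (∑ F ∈ (Finset.univ : Finset (Sym2 (Fin N))).powerset.filter
            (fun F => T ⊆ F), wt p F) = p^S.card := by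
        intro T hT
        rw [meas_superset]
        congr 1
        exact (Finset.mem_powersetCard.1 hT).2
      rw [Finset.sum_congr rfl hterm, Finset.sum_const, nsmul_eq_mul,
        Finset.card_powersetCard]
      have hQcard : ((Finset.univ : Finset (Sym2 (Fin N))).filter
          (fun e => ∀ x ∈ e, x ∈ S)).card ≤ m^2 := by
        have hsub : ((Finset.univ : Finset (Sym2 (Fin N))).filter (fun e => ∀ x ∈ e, x ∈ S))
            ⊆ (S ×ˢ S).image (fun q : Fin N × Fin N => s(q.1, q.2)) := by
          intro e he
          induction e with
          | _ a b =>
            simp only [Finset.mem_filter] at he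
            have ha : a ∈ S := he.2 a (by simp)
            have hb : b ∈ S := he.2 b (by simp)
            exact Finset.mem_image.2 ⟨(a, b), Finset.mem_product.2 ⟨ha, hb⟩, rfl⟩
        calc ((Finset.univ : Finset (Sym2 (Fin N))).filter (fun e => ∀ x ∈ e, x ∈ S)).card
            ≤ ((S ×ˢ S).image (fun q : Fin N × Fin N => s(q.1, q.2))).card := Finset.card_le_card hsub
          _ ≤ (S ×ˢ S).card := Finset.card_image_le
          _ = S.card * S.card := Finset.card_product S S
          _ ≤ m * m := Nat.mul_le_mul hc.2 hc.2
          _ = m^2 := (sq m).symm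
      have hcb : ((((Finset.univ : Finset (Sym2 (Fin N))).filter
            (fun e => ∀ x ∈ e, x ∈ S)).card.choose S.card : ℕ) : ℝ) ≤ (2:ℝ)^(m^2) := by
        calc ((((Finset.univ : Finset (Sym2 (Fin N))).filter
              (fun e => ∀ x ∈ e, x ∈ S)).card.choose S.card : ℕ) : ℝ)
            ≤ ((2^(((Finset.univ : Finset (Sym2 (Fin N))).filter
              (fun e => ∀ x ∈ e, x ∈ S)).card) : ℕ) : ℝ) :=
              Nat.cast_le.2 (choose_le_two_pow _ _)
          _ ≤ ((2^(m^2) : ℕ) : ℝ) := Nat.cast_le.2 (Nat.pow_le_pow_right (by norm_num) hQcard)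
          _ = (2:ℝ)^(m^2) := by push_cast; ring
      exact mul_le_mul_of_nonneg_right hcb (pow_nonneg h0 _)
    · have hempty : (Finset.univ : Finset (Sym2 (Fin N))).powerset.filter
          (fun E => badPred m S E) = ∅ := by
        refine Finset.filter_eq_empty_iff.2 ?_
        intro E _
        intro hbad
        exact hc ⟨hbad.1, hbad.2.1⟩
      rw [hempty]
      simp [hc]
  -- expectation of badCount is at most W
  have hEB : ∑ E ∈ (Finset.univ : Finset (Sym2 (Fin N))).powerset,
      wt p E * ((badCount m E : ℕ) : ℝ) ≤ (W:ℝ) := by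
    have hswap : ∑ E ∈ (Finset.univ : Finset (Sym2 (Fin N))).powerset,
        wt p E * ((badCount m E : ℕ) : ℝ)
        = ∑ S ∈ (Finset.univ : Finset (Fin N)).powerset,
            ∑ E ∈ (Finset.univ : Finset (Sym2 (Fin N))).powerset.filter
              (fun E => badPred m S E), wt p E := by
      calc ∑ E ∈ (Finset.univ : Finset (Sym2 (Fin N))).powerset,
            wt p E * ((badCount m E : ℕ) : ℝ)
          = ∑ E ∈ (Finset.univ : Finset (Sym2 (Fin N))).powerset,
              ∑ S ∈ (Finset.univ : Finset (Fin N)).powerset,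
                (if badPred m S E then wt p E else 0) := by
            refine Finset.sum_congr rfl ?_
            intro E _
            rw [badCount, ← Finset.sum_boole, Finset.mul_sum]
            refine Finset.sum_congr rfl ?_
            intro S _
            by_cases hb : badPred m S E <;> simp [hb]
        _ = ∑ S ∈ (Finset.univ : Finset (Fin N)).powerset,
              ∑ E ∈ (Finset.univ : Finset (Sym2 (Fin N))).powerset,
                (if badPred m S E then wt p E else 0) := Finset.sum_comm
        _ = ∑ S ∈ (Finset.univ : Finset (Fin N)).powerset,
              ∑ E ∈ (Finset.univ : Finset (Sym2 (Fin N))).powerset.filter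
                (fun E => badPred m S E), wt p E := by
            refine Finset.sum_congr rfl ?_
            intro S _
            rw [Finset.sum_filter]
    rw [hswap]
    have hstep : ∑ S ∈ (Finset.univ : Finset (Fin N)).powerset,
        (∑ E ∈ (Finset.univ : Finset (Sym2 (Fin N))).powerset.filter
          (fun E => badPred m S E), wt p E)
        ≤ ∑ S ∈ (Finset.univ : Finset (Fin N)).powerset,
          (if 3 ≤ S.card ∧ S.card ≤ m then (2:ℝ)^(m^2) * p^S.card else 0) :=
      Finset.sum_le_sum (fun S _ => hS S)
    refine le_trans hstep ?_
    -- group by cardinality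
    rw [Finset.sum_powerset]
    have hinner : ∀ j ∈ Finset.range ((Finset.univ : Finset (Fin N)).card + 1),
        (∑ S ∈ Finset.powersetCard j (Finset.univ : Finset (Fin N)),
          (if 3 ≤ S.card ∧ S.card ≤ m then (2:ℝ)^(m^2) * p^S.card else 0))
        ≤ (if 3 ≤ j ∧ j ≤ m then (2:ℝ)^(m^2) * 2^(z*m) else 0) := by
      intro j _
      by_cases hj : 3 ≤ j ∧ j ≤ m
      · simp only [hj, if_true]
        have hterm : ∀ S ∈ Finset.powersetCard j (Finset.univ : Finset (Fin N)),
            (if 3 ≤ S.card ∧ S.card ≤ m then (2:ℝ)^(m^2) * p^S.card else 0)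
            = (2:ℝ)^(m^2) * p^j := by
          intro S hSc
          have : S.card = j := Finset.mem_powersetCard_univ.1 hSc
          rw [this]
          simp [hj]
        rw [Finset.sum_congr rfl hterm, Finset.sum_const, nsmul_eq_mul,
          Finset.card_powersetCard, Finset.card_univ, Fintype.card_fin]
        -- (N.choose j : ℝ) * (2^(m²) * p^j) ≤ 2^(m²) * 2^(z*m)
        have hNj : ((N.choose j : ℕ) : ℝ) * p^j ≤ (2:ℝ)^(z*m) := by
          have h1' : ((N.choose j : ℕ) : ℝ) ≤ ((N:ℕ):ℝ)^j := by
            calc ((N.choose j : ℕ) : ℝ) ≤ ((N^j : ℕ) : ℝ) := Nat.cast_le.2 (Nat.choose_le_pow N j)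
              _ = ((N:ℕ):ℝ)^j := by push_cast; ring
          have h2' : ((N.choose j : ℕ) : ℝ) * p^j ≤ ((N:ℝ) * p)^j := by
            rw [mul_pow]
            exact mul_le_mul_of_nonneg_right h1' (pow_nonneg h0 _)
          rw [hNp] at h2'
          refine le_trans h2' ?_
          rw [← pow_mul]
          refine pow_le_pow_right₀ (by norm_num) ?_
          exact Nat.mul_le_mul_left z hj.2
        calc ((N.choose j : ℕ) : ℝ) * ((2:ℝ)^(m^2) * p^j)
            = (2:ℝ)^(m^2) * (((N.choose j : ℕ) : ℝ) * p^j) := by ring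
          _ ≤ (2:ℝ)^(m^2) * (2:ℝ)^(z*m) := by
              exact mul_le_mul_of_nonneg_left hNj (by positivity)
      · simp only [hj, if_false]
        refine le_of_eq ?_
        refine Finset.sum_eq_zero ?_
        intro S hSc
        have : S.card = j := Finset.mem_powersetCard_univ.1 hSc
        rw [this]
        simp [hj]
    refine le_trans (Finset.sum_le_sum hinner) ?_
    -- at most m nonzero terms
    have hle : ∑ j ∈ Finset.range ((Finset.univ : Finset (Fin N)).card + 1),
        (if 3 ≤ j ∧ j ≤ m then (2:ℝ)^(m^2) * 2^(z*m) else 0)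
        ≤ (m:ℝ) * ((2:ℝ)^(m^2) * 2^(z*m)) := by
      rw [← Finset.sum_filter]
      have hcard : ((Finset.range ((Finset.univ : Finset (Fin N)).card + 1)).filter
          (fun j => 3 ≤ j ∧ j ≤ m)).card ≤ m := by
        have hsub : ((Finset.range ((Finset.univ : Finset (Fin N)).card + 1)).filter
            (fun j => 3 ≤ j ∧ j ≤ m)) ⊆ Finset.Icc 3 m := by
          intro j hj
          simp only [Finset.mem_filter] at hj
          exact Finset.mem_Icc.2 hj.2
        calc _ ≤ (Finset.Icc 3 m).card := Finset.card_le_card hsub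
          _ = m + 1 - 3 := Nat.card_Icc 3 m
          _ ≤ m := by omega
      calc ∑ _j ∈ (Finset.range ((Finset.univ : Finset (Fin N)).card + 1)).filter
            (fun j => 3 ≤ j ∧ j ≤ m), (2:ℝ)^(m^2) * 2^(z*m)
          = (((Finset.range ((Finset.univ : Finset (Fin N)).card + 1)).filter
              (fun j => 3 ≤ j ∧ j ≤ m)).card : ℝ) * ((2:ℝ)^(m^2) * 2^(z*m)) := by
            rw [Finset.sum_const, nsmul_eq_mul]
        _ ≤ (m:ℝ) * ((2:ℝ)^(m^2) * 2^(z*m)) := by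
            refine mul_le_mul_of_nonneg_right ?_ (by positivity)
            exact_mod_cast hcard
    refine le_trans hle ?_
    rw [hW]
    push_cast
    ring_nf
    exact le_refl _
  -- Markov for badCount
  have hWnat1 : 1 ≤ W := by
    rw [hW]
    exact Nat.mul_pos (Nat.mul_pos hm (pow_pos (by norm_num : (0:ℕ) < 2) (m^2)))
      (pow_pos (by norm_num : (0:ℕ) < 2) (z*m))
  have hWpos : (0:ℝ) < 4*(W:ℝ) := by
    have : (1:ℝ) ≤ (W:ℝ) := by exact_mod_cast hWnat1
    linarith
  have hmeasP2 : ∑ E ∈ (Finset.univ : Finset (Sym2 (Fin N))).powerset.filter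
      (fun E => (4*(W:ℝ)) ≤ ((badCount m E : ℕ) : ℝ)), wt p E ≤ 1/4 := by
    have hmk := meas_markov (ι := Sym2 (Fin N)) h0 h1 (fun E => badCount m E) (4*(W:ℝ)) hWpos
    refine le_trans hmk ?_
    rw [div_le_iff₀ hWpos]
    calc ∑ E ∈ (Finset.univ : Finset (Sym2 (Fin N))).powerset,
          wt p E * ((badCount m E : ℕ) : ℝ) ≤ (W:ℝ) := hEB
      _ = 1/4 * (4*(W:ℝ)) := by ring
  -- pick a good edge set
  obtain ⟨E, hnP1, hnP2⟩ := exists_good (ι := Sym2 (Fin N)) h0 h1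
    (fun E => ∃ T : Finset (Fin N), T.card = k+1 ∧
      ∀ a ∈ T, ∀ b ∈ T, a ≠ b → s(a, b) ∉ E)
    (fun E => (4*(W:ℝ)) ≤ ((badCount m E : ℕ) : ℝ)) hmeasP1 hmeasP2
  -- B E < 4W as naturals
  have hBlt : badCount m E ≤ 4*W := by
    by_contra hcon
    push_neg at hcon
    refine hnP2 ?_
    have : ((4*W : ℕ) : ℝ) ≤ ((badCount m E : ℕ) : ℝ) := Nat.cast_le.2 (le_of_lt hcon)
    push_cast at this ⊢
    linarith
  -- delete all bad sets
  obtain ⟨D, hD⟩ : ∃ D : Finset (Fin N), D = ((Finset.univ : Finset (Fin N)).powerset.filter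
      (fun S => badPred m S E)).biUnion id := ⟨_, rfl⟩
  have hDcard : D.card ≤ m * badCount m E := by
    rw [hD]
    calc (((Finset.univ : Finset (Fin N)).powerset.filter
        (fun S => badPred m S E)).biUnion id).card
        ≤ ∑ S ∈ (Finset.univ : Finset (Fin N)).powerset.filter
            (fun S => badPred m S E), (id S).card := Finset.card_biUnion_le
      _ ≤ ∑ S ∈ (Finset.univ : Finset (Fin N)).powerset.filter
            (fun S => badPred m S E), m := by
          refine Finset.sum_le_sum ?_
          intro S hS'
          exact (Finset.mem_filter.1 hS').2.2.1
      _ = badCount m E * m := by rw [Finset.sum_const, smul_eq_mul, badCount]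
      _ = m * badCount m E := Nat.mul_comm _ _
  obtain ⟨V, hV⟩ : ∃ V : Finset (Fin N), V = (Finset.univ : Finset (Fin N)) \ D := ⟨_, rfl⟩
  have hVcard : (m-1)*k + 1 ≤ V.card := by
    have harith := arith_main m z L hm hz hL
    have hVc : V.card = N - D.card := by
      rw [hV, Finset.card_sdiff_of_subset (Finset.subset_univ _), Finset.card_univ, Fintype.card_fin]
    have hDm : D.card ≤ m * (4*W) := le_trans hDcard (Nat.mul_le_mul_left m hBlt)
    have hkk : (m-1)*(2*2^(L-z)*(L+2)) = (m-1)*k := by rw [hk, hs]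
    rw [hkk] at harith
    have h4mW : 4*m*(m*2^(m^2)*2^(z*m)) = m*(4*W) := by rw [hW]; ring
    rw [h4mW] at harith
    have hNval : 2^L = N := hN.symm
    rw [hNval] at harith
    omega
  refine ⟨N, k, E, V, hVcard, ?_, ?_⟩
  · -- no independent set of size k+1
    intro T hT
    by_contra hcon
    push_neg at hcon
    refine hnP1 ⟨T, hT, ?_⟩
    intro a ha b hb hab
    intro hmem
    exact (hcon a ha b hb) hab hmem
  · -- no surviving bad set
    intro S hSV h3 hm'
    by_contra hge
    push_neg at hge
    have hbadS : badPred m S E := ⟨h3, hm', hge⟩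
    have hSD : S ⊆ D := by
      rw [hD]
      intro x hx
      exact Finset.mem_biUnion.2 ⟨S, Finset.mem_filter.2
        ⟨Finset.mem_powerset.2 (Finset.subset_univ _), hbadS⟩, hx⟩
    obtain ⟨x, hx⟩ := Finset.card_pos.1 (lt_of_lt_of_le (by norm_num) h3)
    have hxV := hSV hx
    rw [hV, Finset.mem_sdiff] at hxV
    exact hxV.2 (hSD hx)

end Stmt8

/-- Every good connected ordered graph is an ordered tree: if a connected
ordered graph `G` is `n`-good for every positive integer `n`, then `G` is acyclic. -/
theorem stmt_8 (m : ℕ) (G : SimpleGraph (Fin m)) (hG : G.Connected)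
    (hgood : ∀ n : ℕ, 1 ≤ n → IsNGood n G) :
    G.IsAcyclic := by
  classical
  by_contra hcyc
  simp only [SimpleGraph.IsAcyclic] at hcyc
  push_neg at hcyc
  obtain ⟨v, c, hc⟩ := hcyc
  have hm : 1 ≤ m := by
    have h1 := hG.nonempty
    have : 0 < m := Fin.pos_iff_nonempty.2 h1
    omega
  obtain ⟨N, k, E, V, hVc, hind, hnobad⟩ := Stmt8.main_exists m hm
  -- the random-like graph on `Fin N`
  obtain ⟨GE, hGE⟩ : ∃ GE : SimpleGraph (Fin N),
      GE = { Adj := fun a b => a ≠ b ∧ s(a, b) ∈ E,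
             symm := by
               constructor
               intro a b h
               refine ⟨h.1.symm, ?_⟩
               have := h.2
               rwa [Sym2.eq_swap] at this,
             loopless := by constructor; intro a h; exact h.1 rfl } := ⟨_, rfl⟩
  have hGEadj : ∀ a b, GE.Adj a b ↔ (a ≠ b ∧ s(a, b) ∈ E) := by
    intro a b
    rw [hGE]
  -- goodness at n = k+1
  have hOR : orderedRamsey G (⊤ : SimpleGraph (Fin (k+1))) = (m-1)*k+1 := by
    have := (hgood (k+1) (by omega)).2
    simpa using this
  rw [orderedRamsey] at hOR
  have hne : {N' : ℕ | ∀ R : SimpleGraph (Fin N'),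
      OrderedSubgraph G R ∨ OrderedSubgraph (⊤ : SimpleGraph (Fin (k+1))) Rᶜ}.Nonempty := by
    by_contra hemp
    rw [Set.not_nonempty_iff_eq_empty] at hemp
    rw [hemp, Nat.sInf_empty] at hOR
    omega
  have hmem := Nat.sInf_mem hne
  rw [hOR] at hmem
  -- build the coloring on (m-1)*k+1 vertices
  obtain ⟨f, hf⟩ : ∃ f : Fin ((m-1)*k+1) ↪o Fin N, f = V.orderEmbOfCardLe hVc := ⟨_, rfl⟩
  have hcase := hmem (SimpleGraph.comap (fun i => f i) GE)
  rcases hcase with ⟨φ, hmono, hpres⟩ | ⟨φ, hmono, hpres⟩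
  · -- red ordered copy of G : gives a surviving bad set
    have hψinj : Function.Injective (fun u : Fin m => f (φ u)) :=
      (f.strictMono.comp hmono).injective
    have hsuptail : ∀ x, x ∈ c.support → x ∈ c.support.tail := by
      cases c with
      | nil =>
        exfalso
        have := hc.three_le_length
        simp at this
      | cons hadj q =>
        intro x hx
        rw [SimpleGraph.Walk.support_cons] at hx ⊢
        simp only [List.tail_cons]
        rcases List.mem_cons.1 hx with rfl | hx'
        · exact q.end_mem_support
        · exact hx'
    obtain ⟨S, hSdef⟩ : ∃ S : Finset (Fin N),
        S = (c.support.tail.toFinset).image (fun u => f (φ u)) := ⟨_, rfl⟩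
    have htaillen : c.support.tail.length = c.length := by
      have h := SimpleGraph.Walk.length_support c
      simp only [List.length_tail, h]
      omega
    have hScard : S.card = c.length := by
      rw [hSdef, Finset.card_image_of_injective _ hψinj,
        List.toFinset_card_of_nodup hc.2, htaillen]
    have h3S : 3 ≤ S.card := by rw [hScard]; exact hc.three_le_length
    have hmS : S.card ≤ m := by
      rw [hSdef, Finset.card_image_of_injective _ hψinj]
      calc c.support.tail.toFinset.card ≤ Fintype.card (Fin m) :=
          Finset.card_le_univ _
        _ = m := Fintype.card_fin m
    have hSV : S ⊆ V := by
      rw [hSdef]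
      intro x hx
      obtain ⟨u, _, rfl⟩ := Finset.mem_image.1 hx
      rw [hf]
      exact Finset.orderEmbOfCardLe_mem V hVc (φ u)
    obtain ⟨F, hFdef⟩ : ∃ F : Finset (Sym2 (Fin N)),
        F = (c.edges.toFinset).image (Sym2.map (fun u => f (φ u))) := ⟨_, rfl⟩
    have hFcard : F.card = c.length := by
      rw [hFdef, Finset.card_image_of_injective _ (Sym2.map.injective hψinj),
        List.toFinset_card_of_nodup hc.1.1.edges_nodup,
        SimpleGraph.Walk.length_edges]
    have hFsub : F ⊆ E.filter (fun e => ∀ x ∈ e, x ∈ S) := by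
      rw [hFdef]
      intro e' he'
      obtain ⟨e, he, rfl⟩ := Finset.mem_image.1 he'
      rw [List.mem_toFinset] at he
      induction e with
      | _ a b =>
        have hGadj : G.Adj a b := SimpleGraph.Walk.adj_of_mem_edges c he
        have hR := hpres a b hGadj
        rw [SimpleGraph.comap_adj] at hR
        rw [hGEadj] at hR
        rw [Sym2.map_pair_eq]
        refine Finset.mem_filter.2 ⟨hR.2, ?_⟩
        intro x hx
        rcases Sym2.mem_iff.1 hx with rfl | rfl
        · rw [hSdef]
          refine Finset.mem_image.2 ⟨a, ?_, rfl⟩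
          rw [List.mem_toFinset]
          exact hsuptail a (SimpleGraph.Walk.fst_mem_support_of_mem_edges c he)
        · rw [hSdef]
          refine Finset.mem_image.2 ⟨b, ?_, rfl⟩
          rw [List.mem_toFinset]
          exact hsuptail b (SimpleGraph.Walk.snd_mem_support_of_mem_edges c he)
    have hcard_le : c.length ≤ (E.filter (fun e => ∀ x ∈ e, x ∈ S)).card := by
      rw [← hFcard]
      exact Finset.card_le_card hFsub
    have := hnobad S hSV h3S hmS
    omega
  · -- blue ordered copy of K_{k+1} : gives an independent set of size k+1
    have hψinj : Function.Injective (fun i : Fin (k+1) => f (φ i)) :=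
      (f.strictMono.comp hmono).injective
    obtain ⟨T, hTdef⟩ : ∃ T : Finset (Fin N),
        T = (Finset.univ : Finset (Fin (k+1))).image (fun i => f (φ i)) := ⟨_, rfl⟩
    have hTcard : T.card = k+1 := by
      rw [hTdef, Finset.card_image_of_injective _ hψinj, Finset.card_univ,
        Fintype.card_fin]
    obtain ⟨a, ha, b, hb, hab, hmemE⟩ := hind T hTcard
    rw [hTdef] at ha hb
    obtain ⟨i, _, rfl⟩ := Finset.mem_image.1 ha
    obtain ⟨j, _, rfl⟩ := Finset.mem_image.1 hb
    have hij : i ≠ j := by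
      intro h
      exact hab (by rw [h])
    have hblue := hpres i j ((SimpleGraph.top_adj i j).2 hij)
    rw [SimpleGraph.compl_adj] at hblue
    refine hblue.2 ?_
    rw [SimpleGraph.comap_adj, hGEadj]
    exact ⟨hab, hmemE⟩
end
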